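/- Let λ = 1/√n, assume ‖P_Ω P_T‖ ≤ 1/2 and n ≥ 4, and suppose there exists a dual certificate W (P_T W = 0, ‖W‖ < 1/2, ‖P_Ω(UV* − λ·sgn(S₀) + W)‖_F ≤ λ/4, ‖P_{Ω⊥}(UV* + W)‖_∞ < λ/2). Let H = (H_L, H_S) be a pair with ‖X₀ + H‖_♦ ≤ ‖X₀‖_♦ (where X₀ = (L₀,S₀)) and ‖H_L + H_S‖_F ≤ 2δ. Write H^Γ = P_Γ(H) and H^{Γ⊥} = H − H^Γ. Then ‖(P_{T⊥} × P_{Ω⊥})(H^{Γ⊥})‖_F ≤ ‖P_{T⊥}(H^{Γ⊥}_L)‖_F + ‖P_{Ω⊥}(H^{Γ⊥}_S)‖_F ≤ 4√2·n·‖H^Γ‖_F ≤ 8nδ. -/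

import Mathlib

open Matrix BigOperators

noncomputable def frobNorm {m k : ℕ} (A : Matrix (Fin m) (Fin k) ℝ) : ℝ :=
  Real.sqrt (∑ i, ∑ j, (A i j) ^ 2)

theorem Matrix.isHermitian_transpose_mul_self {m k : ℕ} (A : Matrix (Fin m) (Fin k) ℝ) :
    (Aᵀ * A).IsHermitian := by
  have h := Matrix.isHermitian_conjTranspose_mul_self A
  rwa [Matrix.conjTranspose_eq_transpose_of_trivial] at h

noncomputable def nuclearNorm {m k : ℕ} (A : Matrix (Fin m) (Fin k) ℝ) : ℝ :=
  ∑ i, Real.sqrt ((Matrix.isHermitian_transpose_mul_self A).eigenvalues i)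

def l1Norm {m k : ℕ} (A : Matrix (Fin m) (Fin k) ℝ) : ℝ :=
  ∑ i, ∑ j, |A i j|

noncomputable def linfNorm {m k : ℕ} (A : Matrix (Fin m) (Fin k) ℝ) : ℝ :=
  ⨆ i, ⨆ j, |A i j|

noncomputable def specNorm {m k : ℕ} (A : Matrix (Fin m) (Fin k) ℝ) : ℝ :=
  ‖LinearMap.toContinuousLinearMap (Matrix.toEuclideanLin A)‖

def finner {m k : ℕ} (A B : Matrix (Fin m) (Fin k) ℝ) : ℝ :=
  ∑ i, ∑ j, A i j * B i j

noncomputable def projSet {n : ℕ} (Ω : Set (Fin n × Fin n)) (S : Matrix (Fin n) (Fin n) ℝ) :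
    Matrix (Fin n) (Fin n) ℝ :=
  fun i j => Ω.indicator (fun p => S p.1 p.2) (i, j)

def suppSet {n : ℕ} (S : Matrix (Fin n) (Fin n) ℝ) : Set (Fin n × Fin n) :=
  {p | S p.1 p.2 ≠ 0}

noncomputable def sgnMat {n : ℕ} (S : Matrix (Fin n) (Fin n) ℝ) : Matrix (Fin n) (Fin n) ℝ :=
  fun i j => Real.sign (S i j)

def Tspace {n r : ℕ} (U V : Matrix (Fin n) (Fin r) ℝ) : Set (Matrix (Fin n) (Fin n) ℝ) :=
  {X | ∃ Q R : Matrix (Fin n) (Fin r) ℝ, X = U * Qᵀ + R * Vᵀ}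

def IsOrthProjOnto {n : ℕ} (P : Matrix (Fin n) (Fin n) ℝ →ₗ[ℝ] Matrix (Fin n) (Fin n) ℝ)
    (T : Set (Matrix (Fin n) (Fin n) ℝ)) : Prop :=
  (∀ X, P X ∈ T) ∧ (∀ X ∈ T, P X = X) ∧ (∀ X Y, Y ∈ T → finner (X - P X) Y = 0)

noncomputable def pairFrob {n : ℕ} (X : Matrix (Fin n) (Fin n) ℝ × Matrix (Fin n) (Fin n) ℝ) : ℝ :=
  Real.sqrt (frobNorm X.1 ^ 2 + frobNorm X.2 ^ 2)

noncomputable def projGamma {n : ℕ} (X : Matrix (Fin n) (Fin n) ℝ × Matrix (Fin n) (Fin n) ℝ) :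
    Matrix (Fin n) (Fin n) ℝ × Matrix (Fin n) (Fin n) ℝ :=
  ((1/2 : ℝ) • (X.1 + X.2), (1/2 : ℝ) • (X.1 + X.2))

open scoped Classical

noncomputable def suppFinset {n : ℕ} (S : Matrix (Fin n) (Fin n) ℝ) : Finset (Fin n × Fin n) :=
  Finset.univ.filter (fun p => S p.1 p.2 ≠ 0)

section Sec1
open Matrix
variable {m k : ℕ}

lemma finner_comm (A B : Matrix (Fin m) (Fin k) ℝ) : finner A B = finner B A := by
  unfold finner; congr 1; ext i; congr 1; ext j; ring

lemma finner_add_left (A B C : Matrix (Fin m) (Fin k) ℝ) :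
    finner (A + B) C = finner A C + finner B C := by
  unfold finner; rw [← Finset.sum_add_distrib]
  congr 1; ext i; rw [← Finset.sum_add_distrib]
  congr 1; ext j; simp [Matrix.add_apply]; ring

lemma finner_add_right (A B C : Matrix (Fin m) (Fin k) ℝ) :
    finner A (B + C) = finner A B + finner A C := by
  rw [finner_comm, finner_add_left, finner_comm B A, finner_comm C A]

lemma finner_neg_left (A B : Matrix (Fin m) (Fin k) ℝ) : finner (-A) B = - finner A B := by
  unfold finner; rw [← Finset.sum_neg_distrib]
  congr 1; ext i; rw [← Finset.sum_neg_distrib]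
  congr 1; ext j; simp [Matrix.neg_apply]

lemma finner_sub_left (A B C : Matrix (Fin m) (Fin k) ℝ) :
    finner (A - B) C = finner A C - finner B C := by
  rw [sub_eq_add_neg, finner_add_left, finner_neg_left]; ring

lemma finner_sub_right (A B C : Matrix (Fin m) (Fin k) ℝ) :
    finner A (B - C) = finner A B - finner A C := by
  rw [finner_comm, finner_sub_left, finner_comm B A, finner_comm C A]

lemma finner_smul_left (c : ℝ) (A B : Matrix (Fin m) (Fin k) ℝ) :
    finner (c • A) B = c * finner A B := by
  unfold finner; rw [Finset.mul_sum]
  congr 1; ext i; rw [Finset.mul_sum]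
  congr 1; ext j; simp [Matrix.smul_apply]; ring

lemma finner_self_nonneg (A : Matrix (Fin m) (Fin k) ℝ) : 0 ≤ finner A A := by
  unfold finner
  exact Finset.sum_nonneg fun i _ => Finset.sum_nonneg fun j _ => mul_self_nonneg _

lemma frobNorm_nonneg (A : Matrix (Fin m) (Fin k) ℝ) : 0 ≤ frobNorm A := Real.sqrt_nonneg _

lemma frobNorm_sq (A : Matrix (Fin m) (Fin k) ℝ) : frobNorm A ^ 2 = finner A A := by
  unfold frobNorm finner
  rw [Real.sq_sqrt (Finset.sum_nonneg fun i _ => Finset.sum_nonneg fun j _ => sq_nonneg (A i j))]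
  congr 1; ext i; congr 1; ext j; ring

lemma frobNorm_eq_sqrt_finner (A : Matrix (Fin m) (Fin k) ℝ) :
    frobNorm A = Real.sqrt (finner A A) := by
  rw [← frobNorm_sq, Real.sqrt_sq (frobNorm_nonneg A)]

lemma abs_finner_le (A B : Matrix (Fin m) (Fin k) ℝ) :
    |finner A B| ≤ frobNorm A * frobNorm B := by
  have key : (finner A B) ^ 2 ≤ finner A A * finner B B := by
    unfold finner
    have h1 : ∀ C : Matrix (Fin m) (Fin k) ℝ,
        (∑ i, ∑ j, C i j * C i j : ℝ) = ∑ p : Fin m × Fin k, (fun p => C p.1 p.2) p ^ 2 := by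
      intro C; rw [Fintype.sum_prod_type]; congr 1; ext i; congr 1; ext j; ring
    have h2 : (∑ i, ∑ j, A i j * B i j : ℝ)
        = ∑ p : Fin m × Fin k, (fun p => A p.1 p.2) p * (fun p => B p.1 p.2) p := by
      rw [Fintype.sum_prod_type]
    rw [h1, h1, h2]
    exact Finset.sum_mul_sq_le_sq_mul_sq Finset.univ _ _
  have h3 : |finner A B| = Real.sqrt ((finner A B) ^ 2) := (Real.sqrt_sq_eq_abs _).symm
  rw [h3, frobNorm_eq_sqrt_finner, frobNorm_eq_sqrt_finner, ← Real.sqrt_mul (finner_self_nonneg A)]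
  exact Real.sqrt_le_sqrt key

lemma finner_le_frob (A B : Matrix (Fin m) (Fin k) ℝ) :
    finner A B ≤ frobNorm A * frobNorm B :=
  le_trans (le_abs_self _) (abs_finner_le A B)

lemma frobNorm_triangle (A B : Matrix (Fin m) (Fin k) ℝ) :
    frobNorm (A + B) ≤ frobNorm A + frobNorm B := by
  have h : frobNorm (A + B) ^ 2 ≤ (frobNorm A + frobNorm B) ^ 2 := by
    rw [frobNorm_sq, finner_add_left, finner_add_right, finner_add_right]
    have := finner_le_frob A B
    have h2 := finner_comm B A
    nlinarith [frobNorm_sq A, frobNorm_sq B]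
  have hnn : (0:ℝ) ≤ frobNorm A + frobNorm B := by
    have := frobNorm_nonneg A; have := frobNorm_nonneg B; linarith
  nlinarith [frobNorm_nonneg (A + B)]

lemma frobNorm_neg (A : Matrix (Fin m) (Fin k) ℝ) : frobNorm (-A) = frobNorm A := by
  unfold frobNorm; congr 1; congr 1; ext i; congr 1; ext j; simp [Matrix.neg_apply]

lemma frobNorm_smul (c : ℝ) (A : Matrix (Fin m) (Fin k) ℝ) :
    frobNorm (c • A) = |c| * frobNorm A := by
  unfold frobNorm
  have : (∑ i, ∑ j, ((c • A) i j) ^ 2 : ℝ) = c ^ 2 * ∑ i, ∑ j, (A i j) ^ 2 := by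
    rw [Finset.mul_sum]; congr 1; ext i; rw [Finset.mul_sum]; congr 1; ext j
    simp [Matrix.smul_apply]; ring
  rw [this, Real.sqrt_mul (sq_nonneg c), Real.sqrt_sq_eq_abs]

lemma matrix_eq_zero_of_finner_self (A : Matrix (Fin m) (Fin k) ℝ) (h : finner A A = 0) :
    A = 0 := by
  unfold finner at h
  have h2 : ∀ i ∈ Finset.univ, (∑ j, A i j * A i j : ℝ) = 0 := by
    rw [Finset.sum_eq_zero_iff_of_nonneg] at h
    · exact h
    · intro i _; exact Finset.sum_nonneg fun j _ => mul_self_nonneg _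
  ext i j
  have h3 := h2 i (Finset.mem_univ i)
  rw [Finset.sum_eq_zero_iff_of_nonneg (fun j _ => mul_self_nonneg _)] at h3
  have := h3 j (Finset.mem_univ j)
  simpa [mul_self_eq_zero] using this

end Sec1
section Sec2
open Matrix
variable {N k : ℕ}

noncomputable def vnorm {N : ℕ} (x : Fin N → ℝ) : ℝ := Real.sqrt (∑ i, x i ^ 2)

lemma vnorm_nonneg (x : Fin N → ℝ) : 0 ≤ vnorm x := Real.sqrt_nonneg _

lemma vnorm_sq (x : Fin N → ℝ) : vnorm x ^ 2 = x ⬝ᵥ x := by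
  unfold vnorm
  rw [Real.sq_sqrt (Finset.sum_nonneg fun i _ => sq_nonneg _)]
  unfold dotProduct
  exact Finset.sum_congr rfl fun i _ => pow_two (x i)

lemma euclid_norm_eq (x : EuclideanSpace ℝ (Fin N)) : ‖x‖ = vnorm (⇑x) := by
  rw [EuclideanSpace.norm_eq]; unfold vnorm; congr 1
  exact Finset.sum_congr rfl fun i _ => by rw [Real.norm_eq_abs, sq_abs]

lemma euclid_inner_eq (x y : EuclideanSpace ℝ (Fin N)) :
    (inner ℝ x y : ℝ) = (⇑x) ⬝ᵥ (⇑y) := by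
  rw [PiLp.inner_apply]; unfold dotProduct
  apply Finset.sum_congr rfl
  intro i _
  simp [RCLike.inner_apply, conj_trivial]; ring

lemma abs_dotProduct_le (x y : Fin N → ℝ) : |x ⬝ᵥ y| ≤ vnorm x * vnorm y := by
  have key : (x ⬝ᵥ y) ^ 2 ≤ (∑ i, x i ^ 2) * (∑ i, y i ^ 2) := by
    unfold dotProduct
    exact Finset.sum_mul_sq_le_sq_mul_sq Finset.univ _ _
  have h3 : |x ⬝ᵥ y| = Real.sqrt ((x ⬝ᵥ y) ^ 2) := (Real.sqrt_sq_eq_abs _).symm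
  rw [h3]; unfold vnorm
  rw [← Real.sqrt_mul (Finset.sum_nonneg fun i _ => sq_nonneg _)]
  exact Real.sqrt_le_sqrt key

lemma specNorm_nonneg (A : Matrix (Fin N) (Fin k) ℝ) : 0 ≤ specNorm A := norm_nonneg _

lemma vnorm_mulVec_le (A : Matrix (Fin N) (Fin k) ℝ) (x : Fin k → ℝ) :
    vnorm (A *ᵥ x) ≤ specNorm A * vnorm x := by
  have h := (LinearMap.toContinuousLinearMap (Matrix.toEuclideanLin A)).le_opNorm
    ((WithLp.equiv 2 (Fin k → ℝ)).symm x)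
  simp only [LinearMap.coe_toContinuousLinearMap', Matrix.toEuclideanLin_apply_piLp_toLp] at h
  rw [euclid_norm_eq, euclid_norm_eq] at h
  exact h

lemma specNorm_le_of_bound (A : Matrix (Fin N) (Fin k) ℝ) (c : ℝ) (hc : 0 ≤ c)
    (h : ∀ x : Fin k → ℝ, vnorm (A *ᵥ x) ≤ c * vnorm x) : specNorm A ≤ c := by
  apply ContinuousLinearMap.opNorm_le_bound _ hc
  intro x
  have := h ((WithLp.equiv 2 (Fin k → ℝ)) x)
  simp only [LinearMap.coe_toContinuousLinearMap']
  rw [euclid_norm_eq, euclid_norm_eq]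
  convert this using 2 <;> rfl

lemma abs_dot_mulVec_le (A : Matrix (Fin N) (Fin k) ℝ) (u : Fin N → ℝ) (v : Fin k → ℝ) :
    |u ⬝ᵥ (A *ᵥ v)| ≤ vnorm u * (specNorm A * vnorm v) :=
  le_trans (abs_dotProduct_le u _)
    (mul_le_mul_of_nonneg_left (vnorm_mulVec_le A v) (vnorm_nonneg u))

-- Bessel for a finite orthonormal family, in dotProduct form
lemma bessel_dot {ι : Type*} [Fintype ι] [DecidableEq ι] (e : ι → (Fin N → ℝ))
    (horth : ∀ i j, e i ⬝ᵥ e j = if i = j then (1:ℝ) else 0) (x : Fin N → ℝ) :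
    ∑ i, (e i ⬝ᵥ x) ^ 2 ≤ ∑ i, x i ^ 2 := by
  classical
  set e' : ι → EuclideanSpace ℝ (Fin N) := fun i => (WithLp.equiv 2 (Fin N → ℝ)).symm (e i)
  have ho : Orthonormal ℝ e' := by
    rw [orthonormal_iff_ite]
    intro i j
    rw [euclid_inner_eq]
    exact horth i j
  set x' : EuclideanSpace ℝ (Fin N) := (WithLp.equiv 2 (Fin N → ℝ)).symm x
  have hb := ho.sum_inner_products_le (s := Finset.univ) x'
  have h1 : ∀ i, (‖(inner ℝ (e' i) x' : ℝ)‖ : ℝ) ^ 2 = (e i ⬝ᵥ x) ^ 2 := by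
    intro i; rw [Real.norm_eq_abs, sq_abs, euclid_inner_eq]; rfl
  have h2 : ‖x'‖ ^ 2 = ∑ i, x i ^ 2 := by
    rw [euclid_norm_eq]
    have : ⇑x' = x := rfl
    rw [this]
    unfold vnorm
    rw [Real.sq_sqrt (Finset.sum_nonneg fun i _ => sq_nonneg _)]
  calc ∑ i, (e i ⬝ᵥ x) ^ 2 = ∑ i, ‖(inner ℝ (e' i) x' : ℝ)‖ ^ 2 := by
        congr 1; ext i; rw [h1]
    _ ≤ ‖x'‖ ^ 2 := hb
    _ = ∑ i, x i ^ 2 := h2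

-- size of an orthonormal family is at most N
lemma orthonormal_card_le {ι : Type*} [Fintype ι] [DecidableEq ι] (e : ι → (Fin N → ℝ))
    (horth : ∀ i j, e i ⬝ᵥ e j = if i = j then (1:ℝ) else 0) :
    Fintype.card ι ≤ N := by
  classical
  set e' : ι → EuclideanSpace ℝ (Fin N) := fun i => (WithLp.equiv 2 (Fin N → ℝ)).symm (e i)
  have ho : Orthonormal ℝ e' := by
    rw [orthonormal_iff_ite]
    intro i j
    rw [euclid_inner_eq]
    exact horth i j
  have := ho.linearIndependent.fintype_card_le_finrank
  simpa [finrank_euclideanSpace] using this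

end Sec2
section Sec3
open Matrix
variable {m k : ℕ}

def outerM {m k : ℕ} (x : Fin m → ℝ) (y : Fin k → ℝ) : Matrix (Fin m) (Fin k) ℝ :=
  Matrix.of fun i j => x i * y j

lemma finner_outerM (W : Matrix (Fin m) (Fin k) ℝ) (x : Fin m → ℝ) (y : Fin k → ℝ) :
    finner W (outerM x y) = x ⬝ᵥ (W *ᵥ y) := by
  unfold finner outerM Matrix.mulVec dotProduct
  simp only [Matrix.of_apply]
  apply Finset.sum_congr rfl
  intro i _
  rw [Finset.mul_sum]
  apply Finset.sum_congr rfl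
  intro j _
  ring

lemma finner_sum_right {ι : Type*} (A : Matrix (Fin m) (Fin k) ℝ) (s : Finset ι)
    (M : ι → Matrix (Fin m) (Fin k) ℝ) :
    finner A (∑ t ∈ s, M t) = ∑ t ∈ s, finner A (M t) := by
  unfold finner
  simp only [Matrix.sum_apply, Finset.mul_sum]
  rw [Finset.sum_congr rfl fun i (_ : i ∈ Finset.univ) => Finset.sum_comm]
  rw [Finset.sum_comm]

lemma finner_smul_right (c : ℝ) (A B : Matrix (Fin m) (Fin k) ℝ) :
    finner A (c • B) = c * finner A B := by
  rw [finner_comm, finner_smul_left, finner_comm]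

lemma outerM_mulVec (x : Fin m → ℝ) (y z : Fin k → ℝ) :
    outerM x y *ᵥ z = (y ⬝ᵥ z) • x := by
  funext i
  unfold outerM Matrix.mulVec dotProduct
  simp only [Matrix.of_apply, Pi.smul_apply, smul_eq_mul]
  rw [Finset.sum_mul]
  apply Finset.sum_congr rfl
  intro j _
  ring

lemma dot_mulVec_assoc (A : Matrix (Fin m) (Fin k) ℝ) (x : Fin k → ℝ) (y : Fin m → ℝ) :
    (A *ᵥ x) ⬝ᵥ y = x ⬝ᵥ (Aᵀ *ᵥ y) := by
  unfold Matrix.mulVec dotProduct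
  simp only [Matrix.transpose_apply, Finset.sum_mul, Finset.mul_sum]
  rw [Finset.sum_comm]
  apply Finset.sum_congr rfl; intro j _
  apply Finset.sum_congr rfl; intro i _
  ring

noncomputable def evec (B : Matrix (Fin m) (Fin k) ℝ) (j : Fin k) : Fin k → ℝ :=
  ⇑((Matrix.isHermitian_transpose_mul_self B).eigenvectorBasis j)

noncomputable def eval' (B : Matrix (Fin m) (Fin k) ℝ) (j : Fin k) : ℝ :=
  (Matrix.isHermitian_transpose_mul_self B).eigenvalues j

lemma nuclearNorm_eq (B : Matrix (Fin m) (Fin k) ℝ) :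
    nuclearNorm B = ∑ j, Real.sqrt (eval' B j) := rfl

lemma evec_orth (B : Matrix (Fin m) (Fin k) ℝ) (j j' : Fin k) :
    evec B j ⬝ᵥ evec B j' = if j = j' then (1:ℝ) else 0 := by
  have ho := (Matrix.isHermitian_transpose_mul_self B).eigenvectorBasis.orthonormal
  rw [orthonormal_iff_ite] at ho
  have := ho j j'
  rw [euclid_inner_eq] at this
  simpa [evec] using this

lemma BtB_mulVec (B : Matrix (Fin m) (Fin k) ℝ) (j : Fin k) :
    (Bᵀ * B) *ᵥ evec B j = eval' B j • evec B j :=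
  (Matrix.isHermitian_transpose_mul_self B).mulVec_eigenvectorBasis j

lemma Bv_dot (B : Matrix (Fin m) (Fin k) ℝ) (j j' : Fin k) :
    (B *ᵥ evec B j) ⬝ᵥ (B *ᵥ evec B j') = if j = j' then eval' B j else 0 := by
  rw [dot_mulVec_assoc, Matrix.mulVec_mulVec, BtB_mulVec, dotProduct_smul, evec_orth]
  by_cases h : j = j'
  · subst h; simp
  · simp [h]

lemma eval'_nonneg (B : Matrix (Fin m) (Fin k) ℝ) (j : Fin k) : 0 ≤ eval' B j := by
  have := Bv_dot B j j
  simp at this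
  rw [← this]
  unfold dotProduct
  exact Finset.sum_nonneg fun i _ => mul_self_nonneg _

lemma evec_expansion (B : Matrix (Fin m) (Fin k) ℝ) (x : Fin k → ℝ) :
    ∑ j, (evec B j ⬝ᵥ x) • evec B j = x := by
  have h := (Matrix.isHermitian_transpose_mul_self B).eigenvectorBasis.sum_repr'
    ((WithLp.equiv 2 (Fin k → ℝ)).symm x)
  have h2 : ∀ j, (inner ℝ ((Matrix.isHermitian_transpose_mul_self B).eigenvectorBasis j)
      ((WithLp.equiv 2 (Fin k → ℝ)).symm x) : ℝ) = evec B j ⬝ᵥ x := by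
    intro j; rw [euclid_inner_eq]; rfl
  calc ∑ j, (evec B j ⬝ᵥ x) • evec B j
      = ∑ j, (inner ℝ ((Matrix.isHermitian_transpose_mul_self B).eigenvectorBasis j)
          ((WithLp.equiv 2 (Fin k → ℝ)).symm x) : ℝ) • evec B j := by
        apply Finset.sum_congr rfl; intro j _; rw [h2]
    _ = x := by have h' := congrArg WithLp.ofLp h; simpa [evec] using h'
end Sec3
section Sec4
open Matrix
variable {m k p : ℕ}

lemma sum_mulVec' {ι : Type*} (s : Finset ι) (M : ι → Matrix (Fin m) (Fin k) ℝ) (x : Fin k → ℝ) :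
    (∑ t ∈ s, M t) *ᵥ x = ∑ t ∈ s, (M t *ᵥ x) := by
  funext i
  simp only [Matrix.mulVec, dotProduct, Matrix.sum_apply, Finset.sum_apply, Finset.sum_mul]
  rw [Finset.sum_comm]

lemma dot_sum_right {ι : Type*} (s : Finset ι) (x : Fin m → ℝ) (y : ι → (Fin m → ℝ)) :
    x ⬝ᵥ (∑ t ∈ s, y t) = ∑ t ∈ s, x ⬝ᵥ y t := by
  simp only [dotProduct, Finset.sum_apply, Finset.mul_sum]
  rw [Finset.sum_comm]

lemma sum_dot_left {ι : Type*} (s : Finset ι) (x : Fin m → ℝ) (y : ι → (Fin m → ℝ)) :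
    (∑ t ∈ s, y t) ⬝ᵥ x = ∑ t ∈ s, y t ⬝ᵥ x := by
  rw [dotProduct_comm, dot_sum_right]
  exact Finset.sum_congr rfl fun t _ => dotProduct_comm _ _

lemma mul_outerM (M : Matrix (Fin p) (Fin m) ℝ) (x : Fin m → ℝ) (y : Fin k → ℝ) :
    M * outerM x y = outerM (M *ᵥ x) y := by
  ext i j
  simp only [Matrix.mul_apply, outerM, Matrix.of_apply, Matrix.mulVec, dotProduct,
    Finset.sum_mul]
  apply Finset.sum_congr rfl; intro t _; ring

lemma outerM_mul (x : Fin m → ℝ) (y : Fin k → ℝ) (M : Matrix (Fin k) (Fin p) ℝ) :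
    outerM x y * M = outerM x (Mᵀ *ᵥ y) := by
  ext i j
  simp only [Matrix.mul_apply, outerM, Matrix.of_apply, Matrix.mulVec, dotProduct,
    Matrix.transpose_apply, Finset.mul_sum]
  apply Finset.sum_congr rfl; intro t _; ring

lemma outerM_zero_left (y : Fin k → ℝ) : outerM (0 : Fin m → ℝ) y = 0 := by
  ext i j; simp [outerM]

lemma finner_outerM_left (x : Fin m → ℝ) (y : Fin k → ℝ) (C : Matrix (Fin m) (Fin k) ℝ) :
    finner (outerM x y) C = x ⬝ᵥ (C *ᵥ y) := by
  rw [finner_comm, finner_outerM]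

noncomputable def Jset (B : Matrix (Fin m) (Fin k) ℝ) : Finset (Fin k) :=
  Finset.univ.filter (fun j => eval' B j ≠ 0)

lemma eval'_pos_of_mem {B : Matrix (Fin m) (Fin k) ℝ} {j : Fin k} (hj : j ∈ Jset B) :
    0 < eval' B j := by
  have h1 := eval'_nonneg B j
  have h2 : eval' B j ≠ 0 := (Finset.mem_filter.1 hj).2
  exact lt_of_le_of_ne h1 (Ne.symm h2)

noncomputable def Zmat (B : Matrix (Fin m) (Fin k) ℝ) : Matrix (Fin m) (Fin k) ℝ :=
  ∑ j ∈ Jset B, (Real.sqrt (eval' B j))⁻¹ • outerM (B *ᵥ evec B j) (evec B j)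

lemma vnorm_evec (B : Matrix (Fin m) (Fin k) ℝ) (j : Fin k) : vnorm (evec B j) = 1 := by
  have h : evec B j ⬝ᵥ evec B j = 1 := by simpa using evec_orth B j j
  have : vnorm (evec B j) ^ 2 = 1 := by rw [vnorm_sq, h]
  nlinarith [vnorm_nonneg (evec B j)]

lemma Zmat_mulVec (B : Matrix (Fin m) (Fin k) ℝ) (x : Fin k → ℝ) :
    Zmat B *ᵥ x = ∑ j ∈ Jset B,
      ((Real.sqrt (eval' B j))⁻¹ * (evec B j ⬝ᵥ x)) • (B *ᵥ evec B j) := by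
  unfold Zmat
  rw [sum_mulVec']
  apply Finset.sum_congr rfl; intro j _
  rw [Matrix.smul_mulVec, outerM_mulVec, smul_smul]

lemma vnorm_sq_Zmat (B : Matrix (Fin m) (Fin k) ℝ) (x : Fin k → ℝ) :
    vnorm (Zmat B *ᵥ x) ^ 2 = ∑ j ∈ Jset B, (evec B j ⬝ᵥ x) ^ 2 := by
  rw [vnorm_sq, Zmat_mulVec, sum_dot_left]
  have step : ∀ j ∈ Jset B,
      (((Real.sqrt (eval' B j))⁻¹ * (evec B j ⬝ᵥ x)) • (B *ᵥ evec B j)) ⬝ᵥ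
        (∑ j' ∈ Jset B, ((Real.sqrt (eval' B j'))⁻¹ * (evec B j' ⬝ᵥ x)) • (B *ᵥ evec B j'))
      = (evec B j ⬝ᵥ x) ^ 2 := by
    intro j hj
    rw [smul_dotProduct, dot_sum_right]
    have inner : ∀ j' ∈ Jset B,
        (B *ᵥ evec B j) ⬝ᵥ (((Real.sqrt (eval' B j'))⁻¹ * (evec B j' ⬝ᵥ x)) • (B *ᵥ evec B j'))
        = if j' = j then (Real.sqrt (eval' B j))⁻¹ * (evec B j ⬝ᵥ x) * eval' B j else 0 := by
      intro j' _
      rw [dotProduct_smul, Bv_dot]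
      by_cases h : j = j'
      · subst h; simp
      · simp [h, Ne.symm h]
    rw [Finset.sum_congr rfl inner, Finset.sum_ite_eq' (Jset B) j
        (fun _ => (Real.sqrt (eval' B j))⁻¹ * (evec B j ⬝ᵥ x) * eval' B j), if_pos hj,
        smul_eq_mul]
    have hpos := eval'_pos_of_mem hj
    have hs : Real.sqrt (eval' B j) > 0 := Real.sqrt_pos.2 hpos
    have hsq : Real.sqrt (eval' B j) * Real.sqrt (eval' B j) = eval' B j :=
      Real.mul_self_sqrt (le_of_lt hpos)
    field_simp
    nlinarith [hsq]
  rw [Finset.sum_congr rfl step]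

lemma specNorm_Zmat_le (B : Matrix (Fin m) (Fin k) ℝ) : specNorm (Zmat B) ≤ 1 := by
  apply specNorm_le_of_bound _ 1 zero_le_one
  intro x
  rw [one_mul]
  have h1 : vnorm (Zmat B *ᵥ x) ^ 2 ≤ vnorm x ^ 2 := by
    rw [vnorm_sq_Zmat]
    have h2 : ∑ j ∈ Jset B, (evec B j ⬝ᵥ x) ^ 2 ≤ ∑ j, (evec B j ⬝ᵥ x) ^ 2 :=
      Finset.sum_le_sum_of_subset_of_nonneg (Finset.subset_univ _)
        (fun j _ _ => sq_nonneg _)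
    calc ∑ j ∈ Jset B, (evec B j ⬝ᵥ x) ^ 2 ≤ ∑ j, (evec B j ⬝ᵥ x) ^ 2 := h2
      _ ≤ ∑ i, x i ^ 2 := bessel_dot (evec B) (evec_orth B) x
      _ = vnorm x ^ 2 := by
          unfold vnorm
          rw [Real.sq_sqrt (Finset.sum_nonneg fun i _ => sq_nonneg _)]
  nlinarith [vnorm_nonneg (Zmat B *ᵥ x), vnorm_nonneg x]

lemma finner_Zmat_self (B : Matrix (Fin m) (Fin k) ℝ) : finner (Zmat B) B = nuclearNorm B := by
  unfold Zmat
  rw [finner_comm, finner_sum_right]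
  have step : ∀ j ∈ Jset B,
      finner B ((Real.sqrt (eval' B j))⁻¹ • outerM (B *ᵥ evec B j) (evec B j))
      = Real.sqrt (eval' B j) := by
    intro j hj
    rw [finner_smul_right, finner_outerM]
    have : (B *ᵥ evec B j) ⬝ᵥ (B *ᵥ evec B j) = eval' B j := by
      have := Bv_dot B j j; simpa using this
    rw [this]
    have hpos := eval'_pos_of_mem hj
    have hs : Real.sqrt (eval' B j) > 0 := Real.sqrt_pos.2 hpos
    have hsq : Real.sqrt (eval' B j) * Real.sqrt (eval' B j) = eval' B j :=
      Real.mul_self_sqrt (le_of_lt hpos)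
    field_simp
    rw [sq, hsq]
  rw [Finset.sum_congr rfl step, nuclearNorm_eq]
  apply Finset.sum_subset (Finset.subset_univ _)
  intro j _ hj
  have : eval' B j = 0 := by
    by_contra hne
    exact hj (Finset.mem_filter.2 ⟨Finset.mem_univ j, hne⟩)
  rw [this, Real.sqrt_zero]

lemma mul_Zmat_eq_zero (M : Matrix (Fin p) (Fin m) ℝ) (B : Matrix (Fin m) (Fin k) ℝ)
    (h : M * B = 0) : M * Zmat B = 0 := by
  unfold Zmat
  rw [Matrix.mul_sum]
  apply Finset.sum_eq_zero
  intro j _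
  rw [Matrix.mul_smul, mul_outerM, Matrix.mulVec_mulVec, h, Matrix.zero_mulVec,
    outerM_zero_left, smul_zero]

lemma Vt_mulVec_evec_eq_zero {n r : ℕ} (B : Matrix (Fin m) (Fin n) ℝ)
    (V : Matrix (Fin n) (Fin r) ℝ) (hBV : B * V = 0) {j : Fin n} (hj : j ∈ Jset B) :
    Vᵀ *ᵥ evec B j = 0 := by
  have hpos := eval'_pos_of_mem hj
  have h1 : evec B j = (eval' B j)⁻¹ • ((Bᵀ * B) *ᵥ evec B j) := by
    rw [BtB_mulVec, smul_smul, inv_mul_cancel₀ (ne_of_gt hpos), one_smul]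
  rw [h1, Matrix.mulVec_smul, Matrix.mulVec_mulVec, ← Matrix.mul_assoc]
  have h2 : Vᵀ * Bᵀ = 0 := by
    have := congrArg Matrix.transpose hBV
    rwa [Matrix.transpose_mul, Matrix.transpose_zero] at this
  rw [h2, Matrix.zero_mul, Matrix.zero_mulVec, smul_zero]

lemma Zmat_mul_eq_zero {n r : ℕ} (B : Matrix (Fin m) (Fin n) ℝ)
    (V : Matrix (Fin n) (Fin r) ℝ) (hBV : B * V = 0) : Zmat B * V = 0 := by
  unfold Zmat
  rw [Matrix.sum_mul]
  apply Finset.sum_eq_zero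
  intro j hj
  rw [Matrix.smul_mul, outerM_mul, Vt_mulVec_evec_eq_zero B V hBV hj]
  ext i l
  simp [outerM]

end Sec4
section Sec5
open Matrix
variable {m k n r : ℕ}

lemma outer_decomp (B : Matrix (Fin m) (Fin k) ℝ) :
    B = ∑ j, outerM (B *ᵥ evec B j) (evec B j) := by
  ext i j'
  rw [Matrix.sum_apply]
  have h := congrFun (evec_expansion B (fun j'' => B i j'')) j'
  simp only [Finset.sum_apply, Pi.smul_apply, smul_eq_mul] at h
  rw [← h]
  apply Finset.sum_congr rfl
  intro t _
  simp only [outerM, Matrix.of_apply]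
  have : (B *ᵥ evec B t) i = evec B t ⬝ᵥ (fun j'' => B i j'') := by
    unfold Matrix.mulVec dotProduct
    apply Finset.sum_congr rfl
    intro a _; ring
  rw [this]

lemma finner_self_eq_sum_eval (B : Matrix (Fin m) (Fin k) ℝ) :
    finner B B = ∑ j, eval' B j := by
  nth_rewrite 2 [outer_decomp B]
  rw [finner_sum_right]
  apply Finset.sum_congr rfl
  intro j _
  rw [finner_outerM]
  have := Bv_dot B j j
  simpa using this

lemma nuclearNorm_nonneg (B : Matrix (Fin m) (Fin k) ℝ) : 0 ≤ nuclearNorm B := by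
  rw [nuclearNorm_eq]
  exact Finset.sum_nonneg fun j _ => Real.sqrt_nonneg _

lemma frobNorm_le_nuclearNorm (B : Matrix (Fin m) (Fin k) ℝ) : frobNorm B ≤ nuclearNorm B := by
  have h1 : frobNorm B ^ 2 = ∑ j, eval' B j := by rw [frobNorm_sq, finner_self_eq_sum_eval]
  have h2 : ∑ j, eval' B j ≤ (∑ j, Real.sqrt (eval' B j)) ^ 2 := by
    have := Finset.sum_sq_le_sq_sum_of_nonneg
      (s := (Finset.univ : Finset (Fin k))) (f := fun j => Real.sqrt (eval' B j))
      (fun j _ => Real.sqrt_nonneg _)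
    calc ∑ j, eval' B j = ∑ j, Real.sqrt (eval' B j) ^ 2 := by
          apply Finset.sum_congr rfl
          intro j _
          rw [Real.sq_sqrt (eval'_nonneg B j)]
      _ ≤ (∑ j, Real.sqrt (eval' B j)) ^ 2 := this
  rw [nuclearNorm_eq]
  nlinarith [frobNorm_nonneg B, nuclearNorm_nonneg B, nuclearNorm_eq B]

lemma vonNeumann (W B : Matrix (Fin m) (Fin k) ℝ) :
    |finner W B| ≤ specNorm W * nuclearNorm B := by
  have hdecomp : finner W B = ∑ j, (B *ᵥ evec B j) ⬝ᵥ (W *ᵥ evec B j) := by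
    nth_rewrite 1 [outer_decomp B]
    rw [finner_sum_right]
    apply Finset.sum_congr rfl
    intro j _
    rw [finner_outerM]
  rw [hdecomp, nuclearNorm_eq, Finset.mul_sum]
  refine le_trans (Finset.abs_sum_le_sum_abs _ _) (Finset.sum_le_sum ?_)
  intro j _
  have h1 := abs_dot_mulVec_le W (B *ᵥ evec B j) (evec B j)
  have h2 : vnorm (B *ᵥ evec B j) = Real.sqrt (eval' B j) := by
    have hd : (B *ᵥ evec B j) ⬝ᵥ (B *ᵥ evec B j) = eval' B j := by simpa using Bv_dot B j j
    unfold vnorm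
    rw [show (∑ i, (B *ᵥ evec B j) i ^ 2) = eval' B j by
      rw [← hd]; unfold dotProduct; exact Finset.sum_congr rfl fun i _ => pow_two _]
  rw [h2, vnorm_evec, mul_one] at h1
  calc |(B *ᵥ evec B j) ⬝ᵥ (W *ᵥ evec B j)| ≤ Real.sqrt (eval' B j) * specNorm W := h1
    _ = specNorm W * Real.sqrt (eval' B j) := mul_comm _ _

lemma finner_le_spec_mul_nuclear (W B : Matrix (Fin m) (Fin k) ℝ) :
    finner W B ≤ specNorm W * nuclearNorm B :=
  le_trans (le_abs_self _) (vonNeumann W B)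

lemma nuclear_add_lower (A C : Matrix (Fin m) (Fin k) ℝ) :
    nuclearNorm A - nuclearNorm C ≤ nuclearNorm (A + C) := by
  have h1 : nuclearNorm A = finner (Zmat A) A := (finner_Zmat_self A).symm
  have h2 : finner (Zmat A) A = finner (Zmat A) (A + C) - finner (Zmat A) C := by
    rw [finner_add_right]; ring
  have h3 : finner (Zmat A) (A + C) ≤ nuclearNorm (A + C) := by
    have := finner_le_spec_mul_nuclear (Zmat A) (A + C)
    have hs := specNorm_Zmat_le A
    nlinarith [nuclearNorm_nonneg (A + C)]
  have h4 : -finner (Zmat A) C ≤ nuclearNorm C := by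
    have := vonNeumann (Zmat A) C
    have hs := specNorm_Zmat_le A
    have habs : |finner (Zmat A) C| ≤ nuclearNorm C := by
      nlinarith [nuclearNorm_nonneg C]
    linarith [neg_abs_le (finner (Zmat A) C)]
  linarith

-- combined orthonormal family : columns of V together with evecs of B in Jset
lemma combined_orth (B : Matrix (Fin m) (Fin n) ℝ) (V : Matrix (Fin n) (Fin r) ℝ)
    (hV : Vᵀ * V = 1) (hBV : B * V = 0) :
    ∀ s t : (Fin r ⊕ {j // j ∈ Jset B}),
      (Sum.elim (fun i => (fun a => V a i)) (fun j => evec B j.1) s) ⬝ᵥ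
      (Sum.elim (fun i => (fun a => V a i)) (fun j => evec B j.1) t) =
      if s = t then (1:ℝ) else 0 := by
  have hVcol : ∀ i i' : Fin r, (fun a => V a i) ⬝ᵥ (fun a => V a i') = if i = i' then (1:ℝ) else 0 := by
    intro i i'
    have : (Vᵀ * V) i i' = (fun a => V a i) ⬝ᵥ (fun a => V a i') := by
      rw [Matrix.mul_apply]
      unfold dotProduct
      apply Finset.sum_congr rfl
      intro a _
      rw [Matrix.transpose_apply]
    rw [← this, hV, Matrix.one_apply]
  have hcross : ∀ (i : Fin r) (j : {j // j ∈ Jset B}),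
      (fun a => V a i) ⬝ᵥ evec B j.1 = 0 := by
    intro i j
    have h0 := Vt_mulVec_evec_eq_zero B V hBV j.2
    have heq : (Vᵀ *ᵥ evec B j.1) i = (fun a => V a i) ⬝ᵥ evec B j.1 := by
      unfold Matrix.mulVec dotProduct
      apply Finset.sum_congr rfl
      intro a _
      simp [Matrix.transpose_apply]
    rw [← heq, h0]
    rfl
  rintro (i | j) (i' | j')
  · rw [Sum.elim_inl, Sum.elim_inl, hVcol]
    by_cases h : i = i'
    · subst h; simp
    · simp [h]
  · rw [Sum.elim_inl, Sum.elim_inr, hcross]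
    simp
  · rw [Sum.elim_inr, Sum.elim_inl, dotProduct_comm, hcross]
    simp
  · rw [Sum.elim_inr, Sum.elim_inr, evec_orth]
    by_cases h : j = j'
    · subst h; simp
    · have h2 : (j.1 : Fin n) ≠ j'.1 := fun hc => h (Subtype.ext hc)
      simp [h2, h]

lemma card_r_add_J_le (B : Matrix (Fin m) (Fin n) ℝ) (V : Matrix (Fin n) (Fin r) ℝ)
    (hV : Vᵀ * V = 1) (hBV : B * V = 0) : r + (Jset B).card ≤ n := by
  have := orthonormal_card_le (N := n)
    (Sum.elim (fun i => (fun a => V a i)) (fun j : {j // j ∈ Jset B} => evec B j.1))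
    (combined_orth B V hV hBV)
  simpa [Fintype.card_sum, Fintype.card_coe] using this

lemma r_le_n (V : Matrix (Fin n) (Fin r) ℝ) (hV : Vᵀ * V = 1) : r ≤ n := by
  have h0 : (0 : Matrix (Fin n) (Fin n) ℝ) * V = 0 := by rw [Matrix.zero_mul]
  have := card_r_add_J_le (0 : Matrix (Fin n) (Fin n) ℝ) V hV h0
  omega

lemma nuclear_le_sqrt_card (B : Matrix (Fin m) (Fin k) ℝ) :
    nuclearNorm B ≤ Real.sqrt ((Jset B).card) * frobNorm B := by
  have h1 : nuclearNorm B = ∑ j ∈ Jset B, Real.sqrt (eval' B j) := by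
    rw [nuclearNorm_eq]
    symm
    apply Finset.sum_subset (Finset.subset_univ _)
    intro j _ hj
    have : eval' B j = 0 := by
      by_contra hne
      exact hj (Finset.mem_filter.2 ⟨Finset.mem_univ j, hne⟩)
    rw [this, Real.sqrt_zero]
  have h2 : (∑ j ∈ Jset B, Real.sqrt (eval' B j)) ^ 2 ≤
      ((Jset B).card : ℝ) * ∑ j ∈ Jset B, eval' B j := by
    have := Finset.sum_mul_sq_le_sq_mul_sq (Jset B) (fun _ => (1:ℝ))
      (fun j => Real.sqrt (eval' B j))
    simp only [one_mul, one_pow] at this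
    calc (∑ j ∈ Jset B, Real.sqrt (eval' B j)) ^ 2
        ≤ (∑ _j ∈ Jset B, (1:ℝ)) * ∑ j ∈ Jset B, Real.sqrt (eval' B j) ^ 2 := this
      _ = ((Jset B).card : ℝ) * ∑ j ∈ Jset B, eval' B j := by
          rw [Finset.sum_const, nsmul_eq_mul, mul_one]
          congr 1
          apply Finset.sum_congr rfl
          intro j hj
          rw [Real.sq_sqrt (eval'_nonneg B j)]
  have h3 : ∑ j ∈ Jset B, eval' B j ≤ frobNorm B ^ 2 := by
    rw [frobNorm_sq, finner_self_eq_sum_eval]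
    exact Finset.sum_le_sum_of_subset_of_nonneg (Finset.subset_univ _)
      (fun j _ _ => eval'_nonneg B j)
  have h4 : nuclearNorm B ^ 2 ≤ (Real.sqrt ((Jset B).card) * frobNorm B) ^ 2 := by
    rw [mul_pow, Real.sq_sqrt (Nat.cast_nonneg _), h1]
    nlinarith [((Jset B).card.cast_nonneg : (0:ℝ) ≤ _)]
  have h5 : 0 ≤ Real.sqrt ((Jset B).card) * frobNorm B :=
    mul_nonneg (Real.sqrt_nonneg _) (frobNorm_nonneg _)
  nlinarith [nuclearNorm_nonneg B]

lemma specNorm_UVt_add_Zmat_le (B : Matrix (Fin m) (Fin n) ℝ) (U : Matrix (Fin m) (Fin r) ℝ)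
    (V : Matrix (Fin n) (Fin r) ℝ) (hU : Uᵀ * U = 1) (hV : Vᵀ * V = 1)
    (hUB : Uᵀ * B = 0) (hBV : B * V = 0) :
    specNorm (U * Vᵀ + Zmat B) ≤ 1 := by
  apply specNorm_le_of_bound _ 1 zero_le_one
  intro x
  rw [one_mul]
  have key : vnorm ((U * Vᵀ + Zmat B) *ᵥ x) ^ 2 ≤ vnorm x ^ 2 := by
    rw [vnorm_sq, Matrix.add_mulVec]
    rw [add_dotProduct, dotProduct_add, dotProduct_add]
    set w := Vᵀ *ᵥ x with hw
    have ha : ((U * Vᵀ) *ᵥ x) = U *ᵥ w := by rw [hw, Matrix.mulVec_mulVec]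
    have haa : ((U * Vᵀ) *ᵥ x) ⬝ᵥ ((U * Vᵀ) *ᵥ x) = w ⬝ᵥ w := by
      rw [ha, dot_mulVec_assoc, Matrix.mulVec_mulVec, hU, Matrix.one_mulVec]
    have hUZ : Uᵀ * Zmat B = 0 := mul_Zmat_eq_zero Uᵀ B hUB
    have hab : ((U * Vᵀ) *ᵥ x) ⬝ᵥ (Zmat B *ᵥ x) = 0 := by
      rw [ha, dot_mulVec_assoc, Matrix.mulVec_mulVec, hUZ, Matrix.zero_mulVec,
        dotProduct_zero]
    have hba : (Zmat B *ᵥ x) ⬝ᵥ ((U * Vᵀ) *ᵥ x) = 0 := by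
      rw [dotProduct_comm]; exact hab
    have hbb : (Zmat B *ᵥ x) ⬝ᵥ (Zmat B *ᵥ x) = ∑ j ∈ Jset B, (evec B j ⬝ᵥ x) ^ 2 := by
      rw [← vnorm_sq, vnorm_sq_Zmat]
    rw [haa, hab, hba, hbb]
    have hww : w ⬝ᵥ w = ∑ i : Fin r, ((fun a => V a i) ⬝ᵥ x) ^ 2 := by
      have hcomp : ∀ i, w i = (fun a => V a i) ⬝ᵥ x := by
        intro i
        rw [hw]
        show ∑ a, Vᵀ i a * x a = ∑ a, V a i * x a
        apply Finset.sum_congr rfl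
        intro a _
        simp [Matrix.transpose_apply]
      unfold dotProduct
      apply Finset.sum_congr rfl
      intro i _
      rw [hcomp, pow_two]
      rfl
    rw [hww]
    have hb := bessel_dot (N := n)
      (Sum.elim (fun i => (fun a => V a i)) (fun j : {j // j ∈ Jset B} => evec B j.1))
      (combined_orth B V hV hBV) x
    rw [Fintype.sum_sum_type] at hb
    have hsub : ∑ j ∈ Jset B, (evec B j ⬝ᵥ x) ^ 2
        = ∑ j : {j // j ∈ Jset B}, (evec B j.1 ⬝ᵥ x) ^ 2 := by
      rw [← Finset.sum_coe_sort (Jset B) (fun j => (evec B j ⬝ᵥ x) ^ 2)]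
    rw [hsub]
    have : vnorm x ^ 2 = ∑ i, x i ^ 2 := by
      unfold vnorm
      rw [Real.sq_sqrt (Finset.sum_nonneg fun i _ => sq_nonneg _)]
    rw [this]
    simpa using hb
  nlinarith [vnorm_nonneg ((U * Vᵀ + Zmat B) *ᵥ x), vnorm_nonneg x]

end Sec5
section Sec6
open Matrix
variable {n k r : ℕ}

lemma col_dot (U : Matrix (Fin n) (Fin r) ℝ) (t : Fin r) (w : Fin n → ℝ) :
    (fun a => U a t) ⬝ᵥ w = (Uᵀ *ᵥ w) t := by
  unfold Matrix.mulVec dotProduct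
  apply Finset.sum_congr rfl
  intro a _
  simp [Matrix.transpose_apply]

lemma mul_transpose_eq_sum_outer (U : Matrix (Fin n) (Fin r) ℝ) (Q : Matrix (Fin k) (Fin r) ℝ) :
    U * Qᵀ = ∑ t, outerM (fun a => U a t) (fun b => Q b t) := by
  ext i j
  rw [Matrix.sum_apply, Matrix.mul_apply]
  apply Finset.sum_congr rfl
  intro t _
  simp [outerM, Matrix.transpose_apply]

lemma finner_UQt (C : Matrix (Fin n) (Fin k) ℝ) (U : Matrix (Fin n) (Fin r) ℝ)
    (Q : Matrix (Fin k) (Fin r) ℝ) :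
    finner C (U * Qᵀ) = finner (Uᵀ * C) Qᵀ := by
  rw [mul_transpose_eq_sum_outer, finner_sum_right]
  rw [Finset.sum_congr rfl (fun t (_ : t ∈ Finset.univ) => by
    rw [finner_outerM, col_dot, Matrix.mulVec_mulVec])]
  unfold finner
  simp only [Matrix.mulVec, dotProduct]
  apply Finset.sum_congr rfl
  intro t _
  apply Finset.sum_congr rfl
  intro b _
  simp [Matrix.transpose_apply]

lemma finner_RVt (C : Matrix (Fin n) (Fin k) ℝ) (R : Matrix (Fin n) (Fin r) ℝ)
    (V : Matrix (Fin k) (Fin r) ℝ) :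
    finner C (R * Vᵀ) = finner (C * V) R := by
  rw [mul_transpose_eq_sum_outer, finner_sum_right]
  rw [Finset.sum_congr rfl (fun t (_ : t ∈ Finset.univ) => finner_outerM C _ _)]
  unfold finner
  conv_rhs => rw [Finset.sum_comm]
  apply Finset.sum_congr rfl
  intro t _
  simp only [Matrix.mulVec, dotProduct]
  apply Finset.sum_congr rfl
  intro i _
  rw [Matrix.mul_apply]
  exact mul_comm _ _

lemma finner_zero_left (A : Matrix (Fin n) (Fin k) ℝ) : finner 0 A = 0 := by
  unfold finner
  apply Finset.sum_eq_zero; intro i _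
  apply Finset.sum_eq_zero; intro j _
  simp

lemma finner_zero_of_Ut_zero (C : Matrix (Fin n) (Fin n) ℝ) (U : Matrix (Fin n) (Fin r) ℝ)
    (h : Uᵀ * C = 0) (Q : Matrix (Fin n) (Fin r) ℝ) : finner C (U * Qᵀ) = 0 := by
  rw [finner_UQt, h, finner_zero_left]

lemma finner_zero_of_V_zero (C : Matrix (Fin n) (Fin n) ℝ) (V : Matrix (Fin n) (Fin r) ℝ)
    (h : C * V = 0) (R : Matrix (Fin n) (Fin r) ℝ) : finner C (R * Vᵀ) = 0 := by
  rw [finner_RVt, h, finner_zero_left]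

lemma finner_zero_of_mem_T (C : Matrix (Fin n) (Fin n) ℝ) {U V : Matrix (Fin n) (Fin r) ℝ}
    (hU : Uᵀ * C = 0) (hV : C * V = 0) {Y : Matrix (Fin n) (Fin n) ℝ}
    (hY : Y ∈ Tspace U V) : finner C Y = 0 := by
  obtain ⟨Q, R, rfl⟩ := hY
  rw [finner_add_right, finner_zero_of_Ut_zero C U hU Q, finner_zero_of_V_zero C V hV R,
    add_zero]

section PTfacts
variable {U V : Matrix (Fin n) (Fin r) ℝ}
variable {PT : Matrix (Fin n) (Fin n) ℝ →ₗ[ℝ] Matrix (Fin n) (Fin n) ℝ}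
variable (hPT : IsOrthProjOnto PT (Tspace U V))

include hPT

lemma Ut_residual_zero (X : Matrix (Fin n) (Fin n) ℝ) : Uᵀ * (X - PT X) = 0 := by
  apply matrix_eq_zero_of_finner_self
  have key : ∀ Q : Matrix (Fin n) (Fin r) ℝ, finner (X - PT X) (U * Qᵀ) = 0 := by
    intro Q
    apply hPT.2.2
    exact ⟨Q, 0, by rw [Matrix.zero_mul, add_zero]⟩
  have h1 := key (Uᵀ * (X - PT X))ᵀ
  rw [finner_UQt, Matrix.transpose_transpose] at h1
  have h2 : finner (Uᵀ * (X - PT X)) ((Uᵀ * (X - PT X))ᵀᵀ)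
      = finner (Uᵀ * (X - PT X)) (Uᵀ * (X - PT X)) := by
    rw [Matrix.transpose_transpose]
  rw [← h2]
  exact h1

lemma residual_V_zero (X : Matrix (Fin n) (Fin n) ℝ) : (X - PT X) * V = 0 := by
  apply matrix_eq_zero_of_finner_self
  have key : ∀ R : Matrix (Fin n) (Fin r) ℝ, finner (X - PT X) (R * Vᵀ) = 0 := by
    intro R
    apply hPT.2.2
    exact ⟨0, R, by rw [Matrix.transpose_zero, Matrix.mul_zero, zero_add]⟩
  have h1 := key ((X - PT X) * V)
  rw [finner_RVt] at h1
  rw [finner_comm]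
  exact h1

lemma PT_pythagoras (X : Matrix (Fin n) (Fin n) ℝ) :
    frobNorm X ^ 2 = frobNorm (PT X) ^ 2 + frobNorm (X - PT X) ^ 2 := by
  have horth : finner (X - PT X) (PT X) = 0 := hPT.2.2 X (PT X) (hPT.1 X)
  have hX : PT X + (X - PT X) = X := by abel
  have hc : finner (PT X) (X - PT X) = 0 := by rw [finner_comm]; exact horth
  rw [frobNorm_sq, frobNorm_sq, frobNorm_sq]
  have e1 : finner X X = finner (PT X + (X - PT X)) (PT X + (X - PT X)) := by rw [hX]
  rw [e1, finner_add_left, finner_add_right, finner_add_right, horth, hc]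
  ring

lemma frob_PT_le (X : Matrix (Fin n) (Fin n) ℝ) : frobNorm (PT X) ≤ frobNorm X := by
  have := PT_pythagoras hPT X
  nlinarith [frobNorm_nonneg (PT X), frobNorm_nonneg X, sq_nonneg (frobNorm (X - PT X))]

end PTfacts

lemma sqrt_compare {a b : ℝ} (ha : 0 ≤ a) (hb : 0 ≤ b) (h : a ^ 2 ≤ b ^ 2) : a ≤ b := by
  nlinarith

lemma finner_Vt_Vt (V : Matrix (Fin n) (Fin r) ℝ) (hV : Vᵀ * V = 1) :
    finner Vᵀ (Vᵀ : Matrix (Fin r) (Fin n) ℝ) = r := by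
  unfold finner
  have h : ∀ t : Fin r, (∑ j, Vᵀ t j * Vᵀ t j : ℝ) = 1 := by
    intro t
    have : (Vᵀ * V) t t = ∑ j, Vᵀ t j * Vᵀ t j := by
      rw [Matrix.mul_apply]
      apply Finset.sum_congr rfl
      intro j _
      simp [Matrix.transpose_apply]
    rw [← this, hV, Matrix.one_apply_eq]
  rw [Finset.sum_congr rfl fun t (_ : t ∈ Finset.univ) => h t]
  simp

lemma finner_Vt_diag_Vt (V : Matrix (Fin n) (Fin r) ℝ) (hV : Vᵀ * V = 1) (σ : Fin r → ℝ) :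
    finner Vᵀ (Matrix.diagonal σ * Vᵀ) = ∑ t, σ t := by
  unfold finner
  have h : ∀ t : Fin r, (∑ j, Vᵀ t j * (Matrix.diagonal σ * Vᵀ) t j : ℝ) = σ t := by
    intro t
    have h2 : ∀ j, (Matrix.diagonal σ * Vᵀ) t j = σ t * Vᵀ t j := by
      intro j
      rw [Matrix.diagonal_mul]
    rw [Finset.sum_congr rfl fun j (_ : j ∈ Finset.univ) => by rw [h2 j]]
    have : (Vᵀ * V) t t = ∑ j, Vᵀ t j * Vᵀ t j := by
      rw [Matrix.mul_apply]
      apply Finset.sum_congr rfl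
      intro j _
      simp [Matrix.transpose_apply]
    calc (∑ j, Vᵀ t j * (σ t * Vᵀ t j) : ℝ) = σ t * ∑ j, Vᵀ t j * Vᵀ t j := by
          rw [Finset.mul_sum]
          apply Finset.sum_congr rfl
          intro j _
          ring
      _ = σ t * 1 := by rw [← this, hV, Matrix.one_apply_eq]
      _ = σ t := mul_one _
  rw [Finset.sum_congr rfl fun t (_ : t ∈ Finset.univ) => h t]

lemma vnorm_col_one (U : Matrix (Fin n) (Fin r) ℝ) (hU : Uᵀ * U = 1) (t : Fin r) :
    vnorm (fun a => U a t) = 1 := by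
  have h : (fun a => U a t) ⬝ᵥ (fun a => U a t) = 1 := by
    have : (Uᵀ * U) t t = (fun a => U a t) ⬝ᵥ (fun a => U a t) := by
      rw [Matrix.mul_apply]
      unfold dotProduct
      apply Finset.sum_congr rfl
      intro a _
      simp [Matrix.transpose_apply]
    rw [← this, hU, Matrix.one_apply_eq]
  have h2 : vnorm (fun a => U a t) ^ 2 = 1 := by rw [vnorm_sq, h]
  nlinarith [vnorm_nonneg (fun a => U a t)]

lemma UDV_eq_sum (U : Matrix (Fin n) (Fin r) ℝ) (V : Matrix (Fin n) (Fin r) ℝ) (σ : Fin r → ℝ) :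
    U * (Matrix.diagonal σ * Vᵀ) = ∑ t, σ t • outerM (fun a => U a t) (fun b => V b t) := by
  ext i j
  rw [Matrix.sum_apply, Matrix.mul_apply]
  have h2 : ∀ t, (Matrix.diagonal σ * Vᵀ) t j = σ t * V j t := by
    intro t
    rw [Matrix.diagonal_mul, Matrix.transpose_apply]
  rw [Finset.sum_congr rfl fun t (_ : t ∈ Finset.univ) => by rw [h2 t]]
  apply Finset.sum_congr rfl
  intro t _
  simp [outerM]
  ring

lemma nuclear_UDV_le (U : Matrix (Fin n) (Fin r) ℝ) (V : Matrix (Fin n) (Fin r) ℝ)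
    (σ : Fin r → ℝ) (hU : Uᵀ * U = 1) (hV : Vᵀ * V = 1) (hσ : ∀ t, 0 ≤ σ t) :
    nuclearNorm (U * (Matrix.diagonal σ * Vᵀ)) ≤ ∑ t, σ t := by
  set L := U * (Matrix.diagonal σ * Vᵀ) with hL
  have h1 : nuclearNorm L = finner (Zmat L) L := (finner_Zmat_self L).symm
  rw [h1]
  nth_rewrite 2 [hL]
  rw [UDV_eq_sum, finner_sum_right]
  apply Finset.sum_le_sum
  intro t _
  rw [finner_smul_right, finner_outerM]
  have hb := abs_dot_mulVec_le (Zmat L) (fun a => U a t) (fun b => V b t)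
  rw [vnorm_col_one U hU, vnorm_col_one V hV] at hb
  have hs := specNorm_Zmat_le L
  have habs : |(fun a => U a t) ⬝ᵥ (Zmat L *ᵥ fun b => V b t)| ≤ 1 := by
    calc |(fun a => U a t) ⬝ᵥ (Zmat L *ᵥ fun b => V b t)| ≤ 1 * (specNorm (Zmat L) * 1) := hb
      _ ≤ 1 := by nlinarith [specNorm_nonneg (Zmat L)]
  have := le_abs_self ((fun a => U a t) ⬝ᵥ (Zmat L *ᵥ fun b => V b t))
  calc σ t * ((fun a => U a t) ⬝ᵥ (Zmat L *ᵥ fun b => V b t)) ≤ σ t * 1 := by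
        apply mul_le_mul_of_nonneg_left _ (hσ t)
        linarith
    _ = σ t := mul_one _

end Sec6
section Sec7
open Matrix
variable {n : ℕ}

lemma projSet_apply (Ω : Set (Fin n × Fin n)) (S : Matrix (Fin n) (Fin n) ℝ) (i j : Fin n) :
    projSet Ω S i j = if (i, j) ∈ Ω then S i j else 0 := by
  unfold projSet
  rw [Set.indicator_apply]

lemma projSet_add (Ω : Set (Fin n × Fin n)) (A B : Matrix (Fin n) (Fin n) ℝ) :
    projSet Ω (A + B) = projSet Ω A + projSet Ω B := by
  ext i j
  rw [Matrix.add_apply, projSet_apply, projSet_apply, projSet_apply, Matrix.add_apply]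
  by_cases h : (i, j) ∈ Ω <;> simp [h]

lemma projSet_sub (Ω : Set (Fin n × Fin n)) (A B : Matrix (Fin n) (Fin n) ℝ) :
    projSet Ω (A - B) = projSet Ω A - projSet Ω B := by
  ext i j
  rw [Matrix.sub_apply, projSet_apply, projSet_apply, projSet_apply, Matrix.sub_apply]
  by_cases h : (i, j) ∈ Ω <;> simp [h]

lemma projSet_smul (Ω : Set (Fin n × Fin n)) (c : ℝ) (A : Matrix (Fin n) (Fin n) ℝ) :
    projSet Ω (c • A) = c • projSet Ω A := by
  ext i j
  rw [Matrix.smul_apply, projSet_apply, projSet_apply, Matrix.smul_apply]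
  by_cases h : (i, j) ∈ Ω <;> simp [h]

lemma frob_projSet_le (Ω : Set (Fin n × Fin n)) (A : Matrix (Fin n) (Fin n) ℝ) :
    frobNorm (projSet Ω A) ≤ frobNorm A := by
  unfold frobNorm
  apply Real.sqrt_le_sqrt
  apply Finset.sum_le_sum; intro i _
  apply Finset.sum_le_sum; intro j _
  rw [projSet_apply]
  by_cases h : (i, j) ∈ Ω
  · rw [if_pos h]
  · rw [if_neg h]; simpa using sq_nonneg (A i j)

lemma finner_split (Ω : Set (Fin n × Fin n)) (A B : Matrix (Fin n) (Fin n) ℝ) :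
    finner A B = finner (projSet Ω A) (projSet Ω B) +
      finner (A - projSet Ω A) (B - projSet Ω B) := by
  unfold finner
  rw [← Finset.sum_add_distrib]
  apply Finset.sum_congr rfl; intro i _
  rw [← Finset.sum_add_distrib]
  apply Finset.sum_congr rfl; intro j _
  rw [Matrix.sub_apply, Matrix.sub_apply, projSet_apply, projSet_apply]
  by_cases h : (i, j) ∈ Ω <;> simp [h]

lemma frob_split (Ω : Set (Fin n × Fin n)) (A : Matrix (Fin n) (Fin n) ℝ) :
    frobNorm A ^ 2 = frobNorm (projSet Ω A) ^ 2 + frobNorm (A - projSet Ω A) ^ 2 := by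
  rw [frobNorm_sq, frobNorm_sq, frobNorm_sq]
  exact finner_split Ω A A

lemma l1_nonneg (A : Matrix (Fin n) (Fin n) ℝ) : 0 ≤ l1Norm A :=
  Finset.sum_nonneg fun i _ => Finset.sum_nonneg fun j _ => abs_nonneg _

lemma l1_neg (A : Matrix (Fin n) (Fin n) ℝ) : l1Norm (-A) = l1Norm A := by
  unfold l1Norm
  apply Finset.sum_congr rfl; intro i _
  apply Finset.sum_congr rfl; intro j _
  rw [Matrix.neg_apply, abs_neg]

lemma l1_sub_lower (A B : Matrix (Fin n) (Fin n) ℝ) :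
    l1Norm A - l1Norm B ≤ l1Norm (A - B) := by
  unfold l1Norm
  rw [← Finset.sum_sub_distrib]
  apply Finset.sum_le_sum; intro i _
  rw [← Finset.sum_sub_distrib]
  apply Finset.sum_le_sum; intro j _
  rw [Matrix.sub_apply]
  exact abs_sub_abs_le_abs_sub _ _

lemma frob_le_l1 (A : Matrix (Fin n) (Fin n) ℝ) : frobNorm A ≤ l1Norm A := by
  have hflat : (∑ i, ∑ j, A i j ^ 2 : ℝ) = ∑ p : Fin n × Fin n, |A p.1 p.2| ^ 2 := by
    rw [Fintype.sum_prod_type]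
    apply Finset.sum_congr rfl; intro i _
    apply Finset.sum_congr rfl; intro j _
    rw [sq_abs]
  have hl1 : l1Norm A = ∑ p : Fin n × Fin n, |A p.1 p.2| := by
    unfold l1Norm
    rw [Fintype.sum_prod_type]
  have hcs := Finset.sum_sq_le_sq_sum_of_nonneg
    (s := (Finset.univ : Finset (Fin n × Fin n))) (f := fun p => |A p.1 p.2|)
    (fun p _ => abs_nonneg _)
  unfold frobNorm
  rw [hflat, hl1]
  calc Real.sqrt (∑ p : Fin n × Fin n, |A p.1 p.2| ^ 2)
      ≤ Real.sqrt ((∑ p : Fin n × Fin n, |A p.1 p.2|) ^ 2) := Real.sqrt_le_sqrt hcs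
    _ = ∑ p : Fin n × Fin n, |A p.1 p.2| := by
        rw [Real.sqrt_sq (Finset.sum_nonneg fun p _ => abs_nonneg _)]

lemma real_subgrad' (s h e : ℝ) (he1 : s ≠ 0 → e = 0) (he2 : s = 0 → e = h) :
    |s| + Real.sign s * h + |e| ≤ |s + h| := by
  by_cases hs : s ≠ 0
  · rw [he1 hs, abs_zero, add_zero]
    rcases lt_trichotomy s 0 with h1 | h1 | h1
    · rw [Real.sign_of_neg h1, abs_of_neg h1]
      have := neg_abs_le (s + h)
      linarith [neg_le_abs (s + h)]
    · exact absurd h1 hs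
    · rw [Real.sign_of_pos h1, abs_of_pos h1]
      linarith [le_abs_self (s + h)]
  · push_neg at hs
    subst hs
    rw [he2 rfl, Real.sign_zero, abs_zero, zero_add, zero_mul, zero_add, zero_add]

lemma l1_subgrad (S0 HS : Matrix (Fin n) (Fin n) ℝ) :
    l1Norm S0 + finner (sgnMat S0) HS + l1Norm (HS - projSet (suppSet S0) HS) ≤
      l1Norm (S0 + HS) := by
  unfold l1Norm finner
  rw [← Finset.sum_add_distrib, ← Finset.sum_add_distrib]
  apply Finset.sum_le_sum; intro i _
  rw [← Finset.sum_add_distrib, ← Finset.sum_add_distrib]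
  apply Finset.sum_le_sum; intro j _
  rw [Matrix.add_apply, Matrix.sub_apply, projSet_apply]
  have hmem : ((i, j) ∈ suppSet S0) = (S0 i j ≠ 0) := rfl
  rw [hmem]
  unfold sgnMat
  apply real_subgrad' (S0 i j) (HS i j)
  · intro hs; rw [if_pos hs]; ring
  · intro hs; rw [if_neg (by simp [hs])]; ring

lemma finner_sgn_eq_proj (S0 M : Matrix (Fin n) (Fin n) ℝ) :
    finner (sgnMat S0) M = finner (sgnMat S0) (projSet (suppSet S0) M) := by
  unfold finner
  apply Finset.sum_congr rfl; intro i _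
  apply Finset.sum_congr rfl; intro j _
  rw [projSet_apply]
  have hmem : ((i, j) ∈ suppSet S0) = (S0 i j ≠ 0) := rfl
  rw [hmem]
  by_cases h : S0 i j ≠ 0
  · rw [if_pos h]
  · rw [if_neg h]
    push_neg at h
    unfold sgnMat
    rw [h, Real.sign_zero, zero_mul, zero_mul]

lemma rsign_mul_self (s : ℝ) : Real.sign s * Real.sign s = if s ≠ 0 then (1:ℝ) else 0 := by
  rcases lt_trichotomy s 0 with h1 | h1 | h1
  · rw [Real.sign_of_neg h1, if_pos (ne_of_lt h1)]; norm_num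
  · subst h1; rw [Real.sign_zero, if_neg (by simp)]; norm_num
  · rw [Real.sign_of_pos h1, if_pos (ne_of_gt h1)]; norm_num

lemma frob_sgn_sq (S0 : Matrix (Fin n) (Fin n) ℝ) :
    frobNorm (sgnMat S0) ^ 2 = ((suppFinset S0).card : ℝ) := by
  rw [frobNorm_sq]
  unfold finner
  have h1 : ∀ i j : Fin n, sgnMat S0 i j * sgnMat S0 i j
      = if (i, j) ∈ suppFinset S0 then (1:ℝ) else 0 := by
    intro i j
    have hm : ((i, j) ∈ suppFinset S0) ↔ S0 i j ≠ 0 := by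
      unfold suppFinset; simp
    have := rsign_mul_self (S0 i j)
    unfold sgnMat
    rw [this]
    by_cases h : S0 i j ≠ 0
    · rw [if_pos h, if_pos (hm.mpr h)]
    · rw [if_neg h, if_neg (fun hc => h (hm.mp hc))]
  have h2 : ((suppFinset S0).card : ℝ)
      = ∑ p : Fin n × Fin n, if p ∈ suppFinset S0 then (1:ℝ) else 0 := by
    rw [Finset.sum_ite_mem, Finset.univ_inter, Finset.sum_const, nsmul_eq_mul, mul_one]
  rw [h2, Fintype.sum_prod_type]
  apply Finset.sum_congr rfl; intro i _
  apply Finset.sum_congr rfl; intro j _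
  exact h1 i j

lemma card_supp_le (S0 : Matrix (Fin n) (Fin n) ℝ) : (suppFinset S0).card ≤ n * n := by
  unfold suppFinset
  calc (Finset.univ.filter fun p : Fin n × Fin n => S0 p.1 p.2 ≠ 0).card
      ≤ (Finset.univ : Finset (Fin n × Fin n)).card := Finset.card_filter_le _ _
    _ = n * n := by simp

lemma l1_offsupp_le (S0 X : Matrix (Fin n) (Fin n) ℝ)
    (h : ∀ i j, (i, j) ∈ suppSet S0 → X i j = 0) :
    l1Norm X ≤ Real.sqrt ((n : ℝ) * n - (suppFinset S0).card) * frobNorm X := by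
  classical
  set sc : Finset (Fin n × Fin n) := Finset.univ \ suppFinset S0 with hsc
  have hzero : ∀ p : Fin n × Fin n, p ∉ sc → X p.1 p.2 = 0 := by
    intro p hp
    rw [hsc, Finset.mem_sdiff] at hp
    push_neg at hp
    have hmem := hp (Finset.mem_univ p)
    unfold suppFinset at hmem
    rw [Finset.mem_filter] at hmem
    exact h p.1 p.2 hmem.2
  have hl1 : l1Norm X = ∑ p ∈ sc, |X p.1 p.2| := by
    have e1 : ∑ p : Fin n × Fin n, |X p.1 p.2| = ∑ p ∈ sc, |X p.1 p.2| := by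
      symm
      apply Finset.sum_subset (Finset.subset_univ _)
      intro p _ hp
      rw [hzero p hp, abs_zero]
    unfold l1Norm
    rw [← e1, Fintype.sum_prod_type]
  have hcs := Finset.sum_mul_sq_le_sq_mul_sq sc (fun _ => (1:ℝ)) (fun p => |X p.1 p.2|)
  simp only [one_mul, one_pow] at hcs
  have hsum1 : (∑ _p ∈ sc, (1:ℝ)) = sc.card := by rw [Finset.sum_const]; simp
  have hfr : ∑ p ∈ sc, |X p.1 p.2| ^ 2 ≤ frobNorm X ^ 2 := by
    rw [frobNorm_sq]
    unfold finner
    rw [show (∑ i, ∑ j, X i j * X i j : ℝ) = ∑ p : Fin n × Fin n, |X p.1 p.2| ^ 2 by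
      rw [Fintype.sum_prod_type]
      apply Finset.sum_congr rfl; intro i _
      apply Finset.sum_congr rfl; intro j _
      rw [sq_abs, pow_two]]
    exact Finset.sum_le_sum_of_subset_of_nonneg (Finset.subset_univ _)
      (fun p _ _ => sq_nonneg _)
  have hcardsupp : (suppFinset S0).card ≤ n * n := card_supp_le S0
  have huniv : (Finset.univ : Finset (Fin n × Fin n)).card = n * n := by simp
  have hcard : (sc.card : ℝ) ≤ (n : ℝ) * n - (suppFinset S0).card := by
    have hsub : (suppFinset S0).card ≤ (Finset.univ : Finset (Fin n × Fin n)).card := by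
      rw [huniv]; exact hcardsupp
    have hc2 : ((Finset.univ : Finset (Fin n × Fin n)).card - (suppFinset S0).card : ℕ)
        = n * n - (suppFinset S0).card := by rw [huniv]
    rw [hsc, Finset.card_sdiff_of_subset (Finset.subset_univ _), hc2, Nat.cast_sub hcardsupp]
    push_cast
    linarith
  have hl1sq : l1Norm X ^ 2 ≤ ((n : ℝ) * n - (suppFinset S0).card) * frobNorm X ^ 2 := by
    rw [hl1]
    calc (∑ p ∈ sc, |X p.1 p.2|) ^ 2 ≤ (sc.card : ℝ) * ∑ p ∈ sc, |X p.1 p.2| ^ 2 := by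
          rw [← hsum1]; exact hcs
      _ ≤ ((n : ℝ) * n - (suppFinset S0).card) * frobNorm X ^ 2 := by
          apply mul_le_mul hcard hfr (Finset.sum_nonneg fun p _ => sq_nonneg _)
          linarith [(sc.card.cast_nonneg : (0:ℝ) ≤ _), hcard]
  have hrhs : 0 ≤ Real.sqrt ((n : ℝ) * n - (suppFinset S0).card) * frobNorm X :=
    mul_nonneg (Real.sqrt_nonneg _) (frobNorm_nonneg _)
  apply sqrt_compare (l1_nonneg X) hrhs
  rw [mul_pow, Real.sq_sqrt]
  · exact hl1sq
  · linarith [(sc.card.cast_nonneg : (0:ℝ) ≤ _), hcard]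

lemma abs_entry_le_linf (A : Matrix (Fin n) (Fin n) ℝ) (i j : Fin n) :
    |A i j| ≤ linfNorm A := by
  unfold linfNorm
  have h1 : |A i j| ≤ ⨆ j', |A i j'| :=
    le_ciSup (f := fun j' => |A i j'|) (Set.Finite.bddAbove (Set.finite_range _)) j
  have h2 : (⨆ j', |A i j'|) ≤ ⨆ i', ⨆ j', |A i' j'| :=
    le_ciSup (f := fun i' => ⨆ j', |A i' j'|) (Set.Finite.bddAbove (Set.finite_range _)) i
  exact le_trans h1 h2

lemma hoelder_l1 (A B : Matrix (Fin n) (Fin n) ℝ) (c : ℝ) (hc : ∀ i j, |A i j| ≤ c) :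
    |finner A B| ≤ c * l1Norm B := by
  unfold finner l1Norm
  rw [Finset.mul_sum]
  refine le_trans (Finset.abs_sum_le_sum_abs _ _) (Finset.sum_le_sum ?_)
  intro i _
  rw [Finset.mul_sum]
  refine le_trans (Finset.abs_sum_le_sum_abs _ _) (Finset.sum_le_sum ?_)
  intro j _
  rw [abs_mul]
  exact mul_le_mul_of_nonneg_right (hc i j) (abs_nonneg _)

end Sec7
section Sec8
open Matrix

lemma pairFrob_le_add {n : ℕ} (X Y : Matrix (Fin n) (Fin n) ℝ) :
    pairFrob (X, Y) ≤ frobNorm X + frobNorm Y := by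
  unfold pairFrob
  have h : frobNorm X ^ 2 + frobNorm Y ^ 2 ≤ (frobNorm X + frobNorm Y) ^ 2 := by
    nlinarith [frobNorm_nonneg X, frobNorm_nonneg Y]
  calc Real.sqrt (frobNorm (X, Y).1 ^ 2 + frobNorm (X, Y).2 ^ 2)
      ≤ Real.sqrt ((frobNorm X + frobNorm Y) ^ 2) := Real.sqrt_le_sqrt h
    _ = frobNorm X + frobNorm Y :=
        Real.sqrt_sq (add_nonneg (frobNorm_nonneg X) (frobNorm_nonneg Y))

lemma projSet_neg {n : ℕ} (Ω : Set (Fin n × Fin n)) (A : Matrix (Fin n) (Fin n) ℝ) :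
    projSet Ω (-A) = -projSet Ω A := by
  ext i j
  rw [Matrix.neg_apply, projSet_apply, projSet_apply, Matrix.neg_apply]
  by_cases h : (i, j) ∈ Ω <;> simp [h]
end Sec8

lemma cauchy_two_sqrt (c1 c2 x y m : ℝ) (hc1 : 0 ≤ c1) (hc2 : 0 ≤ c2) (hx : 0 ≤ x)
    (hy : 0 ≤ y) (hm : 0 ≤ m) (hsum : x^2 + y^2 = m^2) :
    Real.sqrt c1 * x + Real.sqrt c2 * y ≤ Real.sqrt (c1 + c2) * m := by
  apply sqrt_compare (add_nonneg (mul_nonneg (Real.sqrt_nonneg _) hx)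
    (mul_nonneg (Real.sqrt_nonneg _) hy)) (mul_nonneg (Real.sqrt_nonneg _) hm)
  have h1 := Real.sq_sqrt hc1
  have h2 := Real.sq_sqrt hc2
  have h3 := Real.sq_sqrt (add_nonneg hc1 hc2)
  nlinarith [sq_nonneg (Real.sqrt c1 * y - Real.sqrt c2 * x),
    mul_nonneg (mul_nonneg (Real.sqrt_nonneg c1) (Real.sqrt_nonneg c2)) (mul_nonneg hx hy)]
section Sec9
open Matrix

lemma nuclear_subgrad {n r : ℕ} (L0 : Matrix (Fin n) (Fin n) ℝ)
    (U V : Matrix (Fin n) (Fin r) ℝ) (σ : Fin r → ℝ)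
    (hU : Uᵀ * U = 1) (hV : Vᵀ * V = 1) (hσ : ∀ i, 0 < σ i)
    (hSVD : L0 = U * Matrix.diagonal σ * Vᵀ)
    (PT : Matrix (Fin n) (Fin n) ℝ →ₗ[ℝ] Matrix (Fin n) (Fin n) ℝ)
    (hPT : IsOrthProjOnto PT (Tspace U V)) (HL : Matrix (Fin n) (Fin n) ℝ) :
    nuclearNorm L0 + finner (U * Vᵀ) HL + nuclearNorm (HL - PT HL) ≤
      nuclearNorm (L0 + HL) := by
  have hUB : Uᵀ * (HL - PT HL) = 0 := Ut_residual_zero hPT HL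
  have hBV : (HL - PT HL) * V = 0 := residual_V_zero hPT HL
  have hUZ : Uᵀ * Zmat (HL - PT HL) = 0 := mul_Zmat_eq_zero Uᵀ (HL - PT HL) hUB
  have hZV : Zmat (HL - PT HL) * V = 0 := Zmat_mul_eq_zero (HL - PT HL) V hBV
  have hspec : specNorm (U * Vᵀ + Zmat (HL - PT HL)) ≤ 1 :=
    specNorm_UVt_add_Zmat_le (HL - PT HL) U V hU hV hUB hBV
  have hL0 : L0 = U * ((Matrix.diagonal σ * Vᵀ)ᵀ)ᵀ := by
    rw [Matrix.transpose_transpose, hSVD, Matrix.mul_assoc]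
  have hUVL0 : finner (U * Vᵀ) L0 = ∑ t, σ t := by
    rw [hL0, finner_UQt, Matrix.transpose_transpose, ← Matrix.mul_assoc, hU, Matrix.one_mul]
    exact finner_Vt_diag_Vt V hV σ
  have hZL0 : finner (Zmat (HL - PT HL)) L0 = 0 := by
    rw [hL0]
    exact finner_zero_of_Ut_zero (Zmat (HL - PT HL)) U hUZ _
  have hZHL : finner (Zmat (HL - PT HL)) HL = nuclearNorm (HL - PT HL) := by
    have hdec : HL = PT HL + (HL - PT HL) := by abel
    have hadd := finner_add_right (Zmat (HL - PT HL)) (PT HL) (HL - PT HL)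
    rw [← hdec] at hadd
    rw [hadd, finner_zero_of_mem_T (Zmat (HL - PT HL)) hUZ hZV (hPT.1 HL),
      finner_Zmat_self, zero_add]
  have hL0le : nuclearNorm L0 ≤ ∑ t, σ t := by
    rw [hSVD, Matrix.mul_assoc]
    exact nuclear_UDV_le U V σ hU hV (fun t => le_of_lt (hσ t))
  have hfle : finner (U * Vᵀ + Zmat (HL - PT HL)) (L0 + HL) ≤ nuclearNorm (L0 + HL) := by
    have hvn := finner_le_spec_mul_nuclear (U * Vᵀ + Zmat (HL - PT HL)) (L0 + HL)
    nlinarith [nuclearNorm_nonneg (L0 + HL)]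
  have hexp : finner (U * Vᵀ + Zmat (HL - PT HL)) (L0 + HL)
      = finner (U * Vᵀ) L0 + finner (U * Vᵀ) HL + finner (Zmat (HL - PT HL)) L0
        + finner (Zmat (HL - PT HL)) HL := by
    rw [finner_add_left, finner_add_right, finner_add_right]
    ring
  rw [hexp, hUVL0, hZL0, hZHL] at hfle
  linarith
end Sec9

set_option maxHeartbeats 2000000 in
/-- With λ = 1/√n, n ≥ 4, ‖P_Ω P_T‖ ≤ 1/2, a dual certificate, and H = (H_L, H_S) with
‖X₀ + H‖_♦ ≤ ‖X₀‖_♦ and ‖H_L + H_S‖_F ≤ 2δ, one has the chain of inequalities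
‖(P_{T⊥} × P_{Ω⊥})(H^{Γ⊥})‖_F ≤ ‖P_{T⊥}(H^{Γ⊥}_L)‖_F + ‖P_{Ω⊥}(H^{Γ⊥}_S)‖_F
  ≤ 4√2·n·‖H^Γ‖_F ≤ 8nδ. -/
theorem stmt8 {n r : ℕ} (hn : 4 ≤ n) (L0 S0 : Matrix (Fin n) (Fin n) ℝ)
    (U V : Matrix (Fin n) (Fin r) ℝ) (σ : Fin r → ℝ)
    -- compact SVD of L₀
    (hU : Uᵀ * U = 1) (hV : Vᵀ * V = 1) (hσ : ∀ i, 0 < σ i)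
    (hSVD : L0 = U * Matrix.diagonal σ * Vᵀ) (hrank : L0.rank = r)
    -- P_T is the orthogonal projection onto T
    (PT : Matrix (Fin n) (Fin n) ℝ →ₗ[ℝ] Matrix (Fin n) (Fin n) ℝ)
    (hPT : IsOrthProjOnto PT (Tspace U V))
    (lam : ℝ) (hlam : lam = (Real.sqrt n)⁻¹)
    -- ‖P_Ω P_T‖ ≤ 1/2
    (hop : ∀ X : Matrix (Fin n) (Fin n) ℝ,
      frobNorm (projSet (suppSet S0) (PT X)) ≤ (1 / 2) * frobNorm X)
    -- the dual certificate W
    (W : Matrix (Fin n) (Fin n) ℝ)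
    (hW1 : PT W = 0) (hW2 : specNorm W < 1 / 2)
    (hW3 : frobNorm (projSet (suppSet S0) (U * Vᵀ - lam • sgnMat S0 + W)) ≤ lam / 4)
    (hW4 : linfNorm ((U * Vᵀ + W) - projSet (suppSet S0) (U * Vᵀ + W)) < lam / 2)
    -- the pair H = (H_L, H_S)
    (δ : ℝ) (HL HS : Matrix (Fin n) (Fin n) ℝ)
    (hH : nuclearNorm (L0 + HL) + lam * l1Norm (S0 + HS) ≤
      nuclearNorm L0 + lam * l1Norm S0)
    (hHsum : frobNorm (HL + HS) ≤ 2 * δ)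
    -- H^Γ = P_Γ(H), H^{Γ⊥} = H − H^Γ
    (HΓ HΓp : Matrix (Fin n) (Fin n) ℝ × Matrix (Fin n) (Fin n) ℝ)
    (hHΓ : HΓ = projGamma (HL, HS)) (hHΓp : HΓp = (HL, HS) - HΓ) :
    pairFrob (HΓp.1 - PT HΓp.1, HΓp.2 - projSet (suppSet S0) HΓp.2) ≤
        frobNorm (HΓp.1 - PT HΓp.1) + frobNorm (HΓp.2 - projSet (suppSet S0) HΓp.2) ∧
      frobNorm (HΓp.1 - PT HΓp.1) + frobNorm (HΓp.2 - projSet (suppSet S0) HΓp.2) ≤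
        4 * Real.sqrt 2 * (n : ℝ) * pairFrob HΓ ∧
      4 * Real.sqrt 2 * (n : ℝ) * pairFrob HΓ ≤ 8 * (n : ℝ) * δ := by
  -- numeric facts about n and lam
  have hn4 : (4:ℝ) ≤ (n:ℝ) := by exact_mod_cast hn
  have hsq4 : Real.sqrt 4 = 2 := by
    rw [show (4:ℝ) = 2^2 by norm_num, Real.sqrt_sq (by norm_num : (0:ℝ) ≤ 2)]
  have hsqn2 : (2:ℝ) ≤ Real.sqrt n := by rw [← hsq4]; exact Real.sqrt_le_sqrt hn4
  have hsqn_pos : 0 < Real.sqrt n := lt_of_lt_of_le (by norm_num) hsqn2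
  have hlam_pos : 0 < lam := by rw [hlam]; exact inv_pos.2 hsqn_pos
  have hlam_half : lam ≤ 1/2 := by
    rw [hlam, show (1/2:ℝ) = (2:ℝ)⁻¹ by norm_num]
    exact inv_anti₀ (by norm_num) hsqn2
  have hsqsq : Real.sqrt n * Real.sqrt n = (n:ℝ) := Real.mul_self_sqrt (by linarith)
  have hlam1 : lam * Real.sqrt n = 1 := by
    rw [hlam]; exact inv_mul_cancel₀ (ne_of_gt hsqn_pos)
  have hlamn : lam * (n:ℝ) = Real.sqrt n := by
    calc lam * (n:ℝ) = lam * (Real.sqrt n * Real.sqrt n) := by rw [hsqsq]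
      _ = Real.sqrt n := by rw [← mul_assoc, hlam1, one_mul]
  -- setup Mm and Qm
  set Mm : Matrix (Fin n) (Fin n) ℝ := (1/2 : ℝ) • (HL + HS) with hMm
  have hHΓ1 : HΓ = (Mm, Mm) := by rw [hHΓ]; rfl
  set Qm : Matrix (Fin n) (Fin n) ℝ := HL - Mm with hQm
  have e1 : HΓp.1 = Qm := by rw [hHΓp, hHΓ1]; rfl
  have e2 : HΓp.2 = -Qm := by
    rw [hHΓp, hHΓ1]
    show HS - Mm = -(HL - Mm)
    ext i j
    simp only [hMm, Matrix.sub_apply, Matrix.neg_apply, Matrix.smul_apply, Matrix.add_apply,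
      smul_eq_mul]
    ring
  have dHL : HL = Qm + Mm := by rw [hQm]; abel
  have dHS : HS = Mm - Qm := by
    rw [hQm]
    ext i j
    simp only [hMm, Matrix.sub_apply, Matrix.smul_apply, Matrix.add_apply, smul_eq_mul]
    ring
  have e3 : -Qm - projSet (suppSet S0) (-Qm) = -(Qm - projSet (suppSet S0) Qm) := by
    rw [projSet_neg]; abel
  -- frobenius of Mm
  have hmδ : frobNorm Mm ≤ δ := by
    rw [hMm, frobNorm_smul, abs_of_pos (by norm_num : (0:ℝ) < 1/2)]
    linarith [hHsum]
  have hδ0 : 0 ≤ δ := by linarith [frobNorm_nonneg (HL + HS), hHsum]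
  have hpg : pairFrob HΓ = Real.sqrt 2 * frobNorm Mm := by
    rw [hHΓ1]
    unfold pairFrob
    have hfst : frobNorm ((Mm, Mm).1) = frobNorm Mm := rfl
    have hsnd : frobNorm ((Mm, Mm).2) = frobNorm Mm := rfl
    rw [hfst, hsnd, show frobNorm Mm ^ 2 + frobNorm Mm ^ 2 = 2 * frobNorm Mm ^ 2 by ring,
      Real.sqrt_mul (by norm_num : (0:ℝ) ≤ 2), Real.sqrt_sq (frobNorm_nonneg Mm)]
  have hs2 : Real.sqrt 2 * Real.sqrt 2 = 2 := Real.mul_self_sqrt (by norm_num)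
  -- main quantitative estimate
  have hmain : frobNorm (Qm - PT Qm) + frobNorm (Qm - projSet (suppSet S0) Qm)
      ≤ 8 * (n:ℝ) * frobNorm Mm := by
    have s1 := nuclear_subgrad L0 U V σ hU hV hσ hSVD PT hPT HL
    have s2 := l1_subgrad S0 HS
    have s2' : lam * (l1Norm S0 + finner (sgnMat S0) HS
        + l1Norm (HS - projSet (suppSet S0) HS)) ≤ lam * l1Norm (S0 + HS) :=
      mul_le_mul_of_nonneg_left s2 hlam_pos.le
    have hstar : finner (U * Vᵀ) HL + nuclearNorm (HL - PT HL)
        + lam * finner (sgnMat S0) HS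
        + lam * l1Norm (HS - projSet (suppSet S0) HS) ≤ 0 := by
      linarith [s1, s2', hH]
    have he3 : finner (U * Vᵀ) HL = finner (U * Vᵀ) Qm + finner (U * Vᵀ) Mm := by
      rw [dHL, finner_add_right]
    have he4 : lam * finner (sgnMat S0) HS
        = lam * finner (sgnMat S0) Mm - lam * finner (sgnMat S0) Qm := by
      rw [dHS, finner_sub_right]; ring
    have hDsplit : finner (U * Vᵀ - lam • sgnMat S0 + W) Qm
        = finner (U * Vᵀ) Qm - lam * finner (sgnMat S0) Qm + finner W Qm := by
      rw [finner_add_left, finner_sub_left, finner_smul_left]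
    have hPTdec : HL - PT HL = (Qm - PT Qm) + (Mm - PT Mm) := by
      rw [dHL, map_add]; abel
    have hPΩdec : HS - projSet (suppSet S0) HS
        = (Mm - projSet (suppSet S0) Mm) - (Qm - projSet (suppSet S0) Qm) := by
      rw [dHS, projSet_sub]; abel
    have hE1 : nuclearNorm (Qm - PT Qm) - nuclearNorm (Mm - PT Mm)
        ≤ nuclearNorm (HL - PT HL) := by
      rw [hPTdec]; exact nuclear_add_lower _ _
    have hE2 : l1Norm (Qm - projSet (suppSet S0) Qm)
        - l1Norm (Mm - projSet (suppSet S0) Mm)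
        ≤ l1Norm (HS - projSet (suppSet S0) HS) := by
      rw [hPΩdec]
      have h1 := l1_sub_lower (Qm - projSet (suppSet S0) Qm) (Mm - projSet (suppSet S0) Mm)
      have h2 : l1Norm ((Qm - projSet (suppSet S0) Qm) - (Mm - projSet (suppSet S0) Mm))
          = l1Norm ((Mm - projSet (suppSet S0) Mm) - (Qm - projSet (suppSet S0) Qm)) := by
        rw [show (Qm - projSet (suppSet S0) Qm) - (Mm - projSet (suppSet S0) Mm)
          = -((Mm - projSet (suppSet S0) Mm) - (Qm - projSet (suppSet S0) Qm)) from by abel,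
          l1_neg]
      linarith
    have hE2' : lam * l1Norm (Qm - projSet (suppSet S0) Qm)
        - lam * l1Norm (Mm - projSet (suppSet S0) Mm)
        ≤ lam * l1Norm (HS - projSet (suppSet S0) HS) := by
      linarith [mul_le_mul_of_nonneg_left hE2 hlam_pos.le]
    have hE6 : |finner (U * Vᵀ - lam • sgnMat S0 + W) Qm|
        ≤ lam/4 * frobNorm (projSet (suppSet S0) Qm)
          + lam/2 * l1Norm (Qm - projSet (suppSet S0) Qm) := by
      have hsplit := finner_split (suppSet S0) (U * Vᵀ - lam • sgnMat S0 + W) Qm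
      have h1 : |finner (projSet (suppSet S0) (U * Vᵀ - lam • sgnMat S0 + W))
          (projSet (suppSet S0) Qm)| ≤ lam/4 * frobNorm (projSet (suppSet S0) Qm) := by
        have hcs := abs_finner_le (projSet (suppSet S0) (U * Vᵀ - lam • sgnMat S0 + W))
          (projSet (suppSet S0) Qm)
        linarith [mul_le_mul_of_nonneg_right hW3
          (frobNorm_nonneg (projSet (suppSet S0) Qm))]
      have h2 : |finner ((U * Vᵀ - lam • sgnMat S0 + W)
            - projSet (suppSet S0) (U * Vᵀ - lam • sgnMat S0 + W))
          (Qm - projSet (suppSet S0) Qm)|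
          ≤ lam/2 * l1Norm (Qm - projSet (suppSet S0) Qm) := by
        apply hoelder_l1
        intro i j
        have hDc : (U * Vᵀ - lam • sgnMat S0 + W)
            - projSet (suppSet S0) (U * Vᵀ - lam • sgnMat S0 + W)
            = (U * Vᵀ + W) - projSet (suppSet S0) (U * Vᵀ + W) := by
          ext i' j'
          simp only [Matrix.sub_apply, Matrix.add_apply, Matrix.smul_apply, projSet_apply,
            smul_eq_mul]
          by_cases h : (i', j') ∈ suppSet S0
          · rw [if_pos h, if_pos h]; ring
          · have hz : S0 i' j' = 0 := by
              by_contra hc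
              exact h hc
            rw [if_neg h, if_neg h]
            unfold sgnMat
            rw [hz, Real.sign_zero]
            ring
        rw [hDc]
        exact le_of_lt (lt_of_le_of_lt (abs_entry_le_linf _ i j) hW4)
      rw [hsplit]
      exact le_trans (abs_add_le _ _) (add_le_add h1 h2)
    have hE7 : |finner W Qm| ≤ 1/2 * nuclearNorm (Qm - PT Qm) := by
      have hWT : finner W (PT Qm) = 0 := by
        have h := hPT.2.2 W (PT Qm) (hPT.1 Qm)
        rwa [hW1, sub_zero] at h
      have hq : finner W Qm = finner W (PT Qm) + finner W (Qm - PT Qm) := by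
        rw [← finner_add_right]
        congr 1
        abel
      rw [hq, hWT, zero_add]
      have hvn := vonNeumann W (Qm - PT Qm)
      have hmul := mul_le_mul_of_nonneg_right hW2.le (nuclearNorm_nonneg (Qm - PT Qm))
      linarith
    have hE8 : |finner (U * Vᵀ) Mm| ≤ Real.sqrt r * frobNorm (PT Mm) := by
      have hmem : (U * Vᵀ) ∈ Tspace U V := ⟨V, 0, by rw [Matrix.zero_mul, add_zero]⟩
      have hperp : finner (Mm - PT Mm) (U * Vᵀ) = 0 := hPT.2.2 Mm (U * Vᵀ) hmem
      have hq : finner (U * Vᵀ) Mm = finner (U * Vᵀ) (PT Mm) := by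
        have hdec : finner (U * Vᵀ) Mm
            = finner (U * Vᵀ) (PT Mm) + finner (U * Vᵀ) (Mm - PT Mm) := by
          rw [← finner_add_right]; congr 1; abel
        rw [hdec, finner_comm (U * Vᵀ) (Mm - PT Mm), hperp, add_zero]
      have hfU : frobNorm (U * Vᵀ) = Real.sqrt r := by
        rw [frobNorm_eq_sqrt_finner]
        congr 1
        rw [finner_UQt, ← Matrix.mul_assoc, hU, Matrix.one_mul]
        exact finner_Vt_Vt V hV
      rw [hq]
      calc |finner (U * Vᵀ) (PT Mm)| ≤ frobNorm (U * Vᵀ) * frobNorm (PT Mm) :=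
            abs_finner_le _ _
        _ = Real.sqrt r * frobNorm (PT Mm) := by rw [hfU]
    have hE9 : |finner (sgnMat S0) Mm|
        ≤ Real.sqrt ((suppFinset S0).card) * frobNorm (projSet (suppSet S0) Mm) := by
      rw [finner_sgn_eq_proj]
      have hfs : frobNorm (sgnMat S0) = Real.sqrt ((suppFinset S0).card) := by
        rw [← Real.sqrt_sq (frobNorm_nonneg (sgnMat S0)), frob_sgn_sq]
      calc |finner (sgnMat S0) (projSet (suppSet S0) Mm)|
          ≤ frobNorm (sgnMat S0) * frobNorm (projSet (suppSet S0) Mm) := abs_finner_le _ _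
        _ = Real.sqrt ((suppFinset S0).card) * frobNorm (projSet (suppSet S0) Mm) := by
            rw [hfs]
    have hrn : r ≤ n := r_le_n V hV
    have hrn' : (r:ℝ) ≤ (n:ℝ) := by exact_mod_cast hrn
    have hE10 : nuclearNorm (Mm - PT Mm)
        ≤ Real.sqrt ((n:ℝ) - r) * frobNorm (Mm - PT Mm) := by
      have hBV := residual_V_zero hPT Mm
      have h1 := nuclear_le_sqrt_card (Mm - PT Mm)
      have h2 := card_r_add_J_le (Mm - PT Mm) V hV hBV
      have h3 : ((Jset (Mm - PT Mm)).card : ℝ) ≤ (n:ℝ) - r := by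
        have hle : (Jset (Mm - PT Mm)).card ≤ n - r := by omega
        have hcast := (Nat.cast_le (α := ℝ)).2 hle
        rwa [Nat.cast_sub hrn] at hcast
      calc nuclearNorm (Mm - PT Mm)
          ≤ Real.sqrt ((Jset (Mm - PT Mm)).card) * frobNorm (Mm - PT Mm) := h1
        _ ≤ Real.sqrt ((n:ℝ) - r) * frobNorm (Mm - PT Mm) :=
            mul_le_mul_of_nonneg_right (Real.sqrt_le_sqrt h3) (frobNorm_nonneg _)
    have hE11 : l1Norm (Mm - projSet (suppSet S0) Mm)
        ≤ Real.sqrt ((n:ℝ) * n - (suppFinset S0).card)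
          * frobNorm (Mm - projSet (suppSet S0) Mm) := by
      apply l1_offsupp_le
      intro i j hmem
      rw [Matrix.sub_apply, projSet_apply, if_pos hmem, sub_self]
    have hE12 : Real.sqrt r * frobNorm (PT Mm)
        + Real.sqrt ((n:ℝ) - r) * frobNorm (Mm - PT Mm)
        ≤ Real.sqrt n * frobNorm Mm := by
      have hxy := PT_pythagoras hPT Mm
      have h := cauchy_two_sqrt (r:ℝ) ((n:ℝ) - r) (frobNorm (PT Mm)) (frobNorm (Mm - PT Mm))
        (frobNorm Mm) (Nat.cast_nonneg r) (by linarith) (frobNorm_nonneg _)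
        (frobNorm_nonneg _) (frobNorm_nonneg _) hxy.symm
      rwa [show (r:ℝ) + ((n:ℝ) - (r:ℝ)) = (n:ℝ) from by ring] at h
    have hcardR : ((suppFinset S0).card : ℝ) ≤ (n:ℝ) * n := by
      have := card_supp_le S0
      have hcast := (Nat.cast_le (α := ℝ)).2 this
      push_cast at hcast
      linarith
    have hE13 : Real.sqrt ((suppFinset S0).card) * frobNorm (projSet (suppSet S0) Mm)
        + Real.sqrt ((n:ℝ) * n - (suppFinset S0).card)
          * frobNorm (Mm - projSet (suppSet S0) Mm)
        ≤ (n:ℝ) * frobNorm Mm := by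
      have huw := frob_split (suppSet S0) Mm
      have h := cauchy_two_sqrt ((suppFinset S0).card : ℝ)
        ((n:ℝ) * n - (suppFinset S0).card) (frobNorm (projSet (suppSet S0) Mm))
        (frobNorm (Mm - projSet (suppSet S0) Mm)) (frobNorm Mm) (Nat.cast_nonneg _)
        (by linarith) (frobNorm_nonneg _) (frobNorm_nonneg _) (frobNorm_nonneg _) huw.symm
      rwa [show ((suppFinset S0).card : ℝ) + ((n:ℝ) * n - ((suppFinset S0).card : ℝ))
          = (n:ℝ) * (n:ℝ) from by ring,
        show Real.sqrt ((n:ℝ) * (n:ℝ)) = (n:ℝ) from Real.sqrt_mul_self (by linarith)] at h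
    have hC : frobNorm (projSet (suppSet S0) Qm)
        ≤ 2 * frobNorm (Qm - PT Qm) + frobNorm (Qm - projSet (suppSet S0) Qm) := by
      have hsplitQ : projSet (suppSet S0) Qm
          = projSet (suppSet S0) (PT Qm) + projSet (suppSet S0) (Qm - PT Qm) := by
        rw [← projSet_add, show PT Qm + (Qm - PT Qm) = Qm from by abel]
      have h1 : frobNorm (projSet (suppSet S0) Qm)
          ≤ frobNorm (projSet (suppSet S0) (PT Qm))
            + frobNorm (projSet (suppSet S0) (Qm - PT Qm)) := by
        rw [hsplitQ]
        exact frobNorm_triangle _ _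
      have h2 := hop Qm
      have h3 : frobNorm (projSet (suppSet S0) (Qm - PT Qm)) ≤ frobNorm (Qm - PT Qm) :=
        frob_projSet_le _ _
      have h4 : frobNorm Qm ≤ frobNorm (projSet (suppSet S0) Qm)
          + frobNorm (Qm - projSet (suppSet S0) Qm) := by
        have hq : Qm = projSet (suppSet S0) Qm + (Qm - projSet (suppSet S0) Qm) := by abel
        calc frobNorm Qm
            = frobNorm (projSet (suppSet S0) Qm + (Qm - projSet (suppSet S0) Qm)) := by
              rw [← hq]
          _ ≤ _ := frobNorm_triangle _ _
      linarith
    -- abs-value one-sided bounds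
    have habs1 : -(finner (U * Vᵀ - lam • sgnMat S0 + W) Qm)
        ≤ lam/4 * frobNorm (projSet (suppSet S0) Qm)
          + lam/2 * l1Norm (Qm - projSet (suppSet S0) Qm) :=
      le_trans (neg_le_abs _) hE6
    have habs2 : finner W Qm ≤ 1/2 * nuclearNorm (Qm - PT Qm) :=
      le_trans (le_abs_self _) hE7
    have habs3 : -(finner (U * Vᵀ) Mm) ≤ Real.sqrt r * frobNorm (PT Mm) :=
      le_trans (neg_le_abs _) hE8
    have habs4 : lam * (-(finner (sgnMat S0) Mm))
        ≤ lam * (Real.sqrt ((suppFinset S0).card) * frobNorm (projSet (suppSet S0) Mm)) :=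
      mul_le_mul_of_nonneg_left (le_trans (neg_le_abs _) hE9) hlam_pos.le
    have hE11' : lam * l1Norm (Mm - projSet (suppSet S0) Mm)
        ≤ lam * (Real.sqrt ((n:ℝ) * n - (suppFinset S0).card)
          * frobNorm (Mm - projSet (suppSet S0) Mm)) :=
      mul_le_mul_of_nonneg_left hE11 hlam_pos.le
    have hE13' : lam * (Real.sqrt ((suppFinset S0).card) * frobNorm (projSet (suppSet S0) Mm)
          + Real.sqrt ((n:ℝ) * n - (suppFinset S0).card)
            * frobNorm (Mm - projSet (suppSet S0) Mm))
        ≤ lam * ((n:ℝ) * frobNorm Mm) :=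
      mul_le_mul_of_nonneg_left hE13 hlam_pos.le
    have hlamrw : lam * ((n:ℝ) * frobNorm Mm) = Real.sqrt n * frobNorm Mm := by
      rw [← mul_assoc, hlamn]
    have step1 : nuclearNorm (HL - PT HL) + lam * l1Norm (HS - projSet (suppSet S0) HS)
        ≤ -(finner (U * Vᵀ - lam • sgnMat S0 + W) Qm) + finner W Qm
          - finner (U * Vᵀ) Mm - lam * finner (sgnMat S0) Mm := by
      linarith [hstar, he3, he4, hDsplit]
    have step3 : nuclearNorm (Qm - PT Qm) + lam * l1Norm (Qm - projSet (suppSet S0) Qm)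
        ≤ nuclearNorm (Mm - PT Mm) + lam * l1Norm (Mm - projSet (suppSet S0) Mm)
          + (lam/4 * frobNorm (projSet (suppSet S0) Qm)
            + lam/2 * l1Norm (Qm - projSet (suppSet S0) Qm))
          + 1/2 * nuclearNorm (Qm - PT Qm)
          + Real.sqrt r * frobNorm (PT Mm)
          + lam * (Real.sqrt ((suppFinset S0).card)
            * frobNorm (projSet (suppSet S0) Mm)) := by
      linarith [step1, hE1, hE2', habs1, habs2, habs3, habs4]
    have step4 : nuclearNorm (Mm - PT Mm) + Real.sqrt r * frobNorm (PT Mm)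
        ≤ Real.sqrt n * frobNorm Mm := by
      linarith [hE10, hE12]
    have step5 : lam * l1Norm (Mm - projSet (suppSet S0) Mm)
        + lam * (Real.sqrt ((suppFinset S0).card) * frobNorm (projSet (suppSet S0) Mm))
        ≤ Real.sqrt n * frobNorm Mm := by
      linarith [hE11', hE13', hlamrw]
    have hkey : 1/2 * nuclearNorm (Qm - PT Qm)
        + lam/2 * l1Norm (Qm - projSet (suppSet S0) Qm)
        ≤ lam/4 * frobNorm (projSet (suppSet S0) Qm)
          + 2 * Real.sqrt n * frobNorm Mm := by
      linarith [step3, step4, step5]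
    have g4 : lam/4 * (frobNorm (Qm - PT Qm) + frobNorm (Qm - projSet (suppSet S0) Qm))
        ≤ 2 * Real.sqrt n * frobNorm Mm := by
      have haA := frobNorm_le_nuclearNorm (Qm - PT Qm)
      have hbB := frob_le_l1 (Qm - projSet (suppSet S0) Qm)
      have hpa := mul_le_mul_of_nonneg_left hC hlam_pos.le
      have haA' := mul_le_mul_of_nonneg_left haA hlam_pos.le
      have hbB' := mul_le_mul_of_nonneg_left hbB hlam_pos.le
      have hlamA : lam * nuclearNorm (Qm - PT Qm) ≤ 1/2 * nuclearNorm (Qm - PT Qm) :=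
        mul_le_mul_of_nonneg_right hlam_half (nuclearNorm_nonneg _)
      linarith [hkey, hpa, haA', hbB', hlamA, nuclearNorm_nonneg (Qm - PT Qm)]
    have h6 := mul_le_mul_of_nonneg_left g4 (Real.sqrt_nonneg (n:ℝ))
    have hsl : Real.sqrt n * lam = 1 := by rw [mul_comm]; exact hlam1
    have h7 : Real.sqrt (n:ℝ) * (lam/4 * (frobNorm (Qm - PT Qm)
          + frobNorm (Qm - projSet (suppSet S0) Qm)))
        = 1/4 * (frobNorm (Qm - PT Qm) + frobNorm (Qm - projSet (suppSet S0) Qm)) := by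
      have hre : Real.sqrt (n:ℝ) * (lam/4 * (frobNorm (Qm - PT Qm)
            + frobNorm (Qm - projSet (suppSet S0) Qm)))
          = (Real.sqrt (n:ℝ) * lam) * ((frobNorm (Qm - PT Qm)
            + frobNorm (Qm - projSet (suppSet S0) Qm)) / 4) := by ring
      rw [hre, hsl]
      ring
    have h8 : Real.sqrt (n:ℝ) * (2 * Real.sqrt (n:ℝ) * frobNorm Mm)
        = 2 * (n:ℝ) * frobNorm Mm := by
      have hre : Real.sqrt (n:ℝ) * (2 * Real.sqrt (n:ℝ) * frobNorm Mm)
          = 2 * (Real.sqrt (n:ℝ) * Real.sqrt (n:ℝ)) * frobNorm Mm := by ring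
      rw [hre, hsqsq]
    linarith [h6, h7, h8]

  -- assemble the three conjuncts
  refine ⟨?_, ?_, ?_⟩
  · exact pairFrob_le_add _ _
  · rw [e1, e2, e3, frobNorm_neg, hpg]
    have heq : 4 * Real.sqrt 2 * (n:ℝ) * (Real.sqrt 2 * frobNorm Mm)
        = 8 * (n:ℝ) * frobNorm Mm := by
      calc 4 * Real.sqrt 2 * (n:ℝ) * (Real.sqrt 2 * frobNorm Mm)
          = 4 * (Real.sqrt 2 * Real.sqrt 2) * (n:ℝ) * frobNorm Mm := by ring
        _ = 8 * (n:ℝ) * frobNorm Mm := by rw [hs2]; ring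
    rw [heq]
    exact hmain
  · rw [hpg]
    have heq : 4 * Real.sqrt 2 * (n:ℝ) * (Real.sqrt 2 * frobNorm Mm)
        = 8 * (n:ℝ) * frobNorm Mm := by
      calc 4 * Real.sqrt 2 * (n:ℝ) * (Real.sqrt 2 * frobNorm Mm)
          = 4 * (Real.sqrt 2 * Real.sqrt 2) * (n:ℝ) * frobNorm Mm := by ring
        _ = 8 * (n:ℝ) * frobNorm Mm := by rw [hs2]; ring
    rw [heq]
    have := mul_le_mul_of_nonneg_left hmδ (by linarith : (0:ℝ) ≤ 8 * (n:ℝ))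
    calc 8 * (n:ℝ) * frobNorm Mm = 8 * (n:ℝ) * frobNorm Mm := rfl
      _ ≤ 8 * (n:ℝ) * δ := by nlinarith [hmδ, hn4]
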